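/- arXiv:1511.09455 — 2 statements merged into one kernel-verified Lean document; each statement's English description precedes it below -/
import Mathlib

section
/- For every nonempty binary tree B, the number of non-ambiguous trees of shape B equals |LV(B)|! · |RV(B)|! divided by ( ∏_{U a left child of B} EL(U) · ∏_{U a right child of B} ER(U) ). -/
inductive BT : Type where
  | nil : BT
  | node : BT → BT → BT
  deriving DecidableEq

namespace BT

/-- The list of positions (paths from the root, `false` = left step, `true` = right step)
of the vertices of a binary tree. -/
def paths : BT → List (List Bool)
  | .nil => []
  | .node l r => [] :: (l.paths.map (List.cons false) ++ r.paths.map (List.cons true))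

/-- Number of vertices. -/
def size (B : BT) : ℕ := B.paths.length

/-- The set of left children (positions ending with a left step). -/
def leftVertices (B : BT) : Finset (List Bool) :=
  B.paths.toFinset.filter (fun p => p.getLast? = some false)

/-- The set of right children (positions ending with a right step). -/
def rightVertices (B : BT) : Finset (List Bool) :=
  B.paths.toFinset.filter (fun p => p.getLast? = some true)

end BT

/-- A non-ambiguous tree of shape `B`: bijective labellings of the left (resp. right)
children by `Fin |LV B|` (resp. `Fin |RV B|`), decreasing along ancestry. -/
structure NAT (B : BT) where
  fL : {p // p ∈ B.leftVertices} → Fin B.leftVertices.card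
  fR : {p // p ∈ B.rightVertices} → Fin B.rightVertices.card
  bijL : Function.Bijective fL
  bijR : Function.Bijective fR
  ancL : ∀ u v : {p // p ∈ B.leftVertices}, u.1 <+: v.1 → u ≠ v → (fL v : ℕ) < fL u
  ancR : ∀ u v : {p // p ∈ B.rightVertices}, u.1 <+: v.1 → u ≠ v → (fR v : ℕ) < fR u

/-- `EL B u`: the number of left children of `B` in the subtree rooted at `u`
(counting `u` itself when `u` is a left child). -/
def EL (B : BT) (u : List Bool) : ℕ :=
  (B.leftVertices.filter (fun v => u <+: v)).card

/-- `ER B u`: the number of right children of `B` in the subtree rooted at `u`. -/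
def ER (B : BT) (u : List Bool) : ℕ :=
  (B.rightVertices.filter (fun v => u <+: v)).card

/-! ### Auxiliary: hook length formula for labellings of a forest of lists. -/

/-- The hook of `u` inside `S`. -/
def hook (S : Finset (List Bool)) (u : List Bool) : ℕ :=
  (S.filter (fun v => u <+: v)).card

lemma hook_pos {S : Finset (List Bool)} {u : List Bool} (hu : u ∈ S) : 0 < hook S u :=
  Finset.card_pos.2 ⟨u, Finset.mem_filter.2 ⟨hu, List.prefix_refl u⟩⟩

/-- A decreasing labelling of `S` (one "side" of a NAT). -/
structure Lab (S : Finset (List Bool)) where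
  f : {p // p ∈ S} → Fin S.card
  bij : Function.Bijective f
  anc : ∀ u v : {p // p ∈ S}, u.1 <+: v.1 → u ≠ v → (f v : ℕ) < f u

lemma Lab.ext' {S : Finset (List Bool)} {a b : Lab S} (h : a.f = b.f) : a = b := by
  cases a; cases b; cases h; rfl

noncomputable instance {S : Finset (List Bool)} : Fintype (Lab S) :=
  Fintype.ofInjective Lab.f (fun _ _ h => Lab.ext' h)

/-- The roots of the forest `S`: elements with no strict prefix in `S`. -/
def roots (S : Finset (List Bool)) : Finset (List Bool) :=
  S.filter (fun r => ∀ u ∈ S, u <+: r → u = r)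

lemma roots_subset {S : Finset (List Bool)} : roots S ⊆ S := Finset.filter_subset _ _

lemma root_prop {S : Finset (List Bool)} {r : List Bool} (hr : r ∈ roots S) :
    ∀ u ∈ S, u <+: r → u = r := (Finset.mem_filter.1 hr).2

lemma exists_root_prefix {S : Finset (List Bool)} {v : List Bool} (hv : v ∈ S) :
    ∃ r ∈ roots S, r <+: v := by
  classical
  obtain ⟨r, hrmem, hrmin⟩ := Finset.exists_min_image (S.filter (· <+: v))
    (fun u => u.length) ⟨v, by simp [hv]⟩
  obtain ⟨hrS, hrv⟩ := Finset.mem_filter.1 hrmem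
  refine ⟨r, Finset.mem_filter.2 ⟨hrS, ?_⟩, hrv⟩
  intro u hu hur
  have hle := hrmin u (Finset.mem_filter.2 ⟨hu, hur.trans hrv⟩)
  exact hur.eq_of_length (le_antisymm hur.length_le hle)

lemma root_prefix_unique {S : Finset (List Bool)} {r₁ r₂ v : List Bool}
    (h₁ : r₁ ∈ roots S) (h₂ : r₂ ∈ roots S) (p₁ : r₁ <+: v) (p₂ : r₂ <+: v) : r₁ = r₂ := by
  rcases List.prefix_or_prefix_of_prefix p₁ p₂ with h | h
  · exact root_prop h₂ r₁ (roots_subset h₁) h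
  · exact (root_prop h₁ r₂ (roots_subset h₂) h).symm

lemma sum_hook_roots (S : Finset (List Bool)) : ∑ r ∈ roots S, hook S r = S.card := by
  classical
  have key : ∀ v : List Bool, v ∈ S → ∃ r, r ∈ roots S ∧ r <+: v := by
    intro v hv; obtain ⟨r, h1, h2⟩ := exists_root_prefix hv; exact ⟨r, h1, h2⟩
  choose rt hrt using key
  set Rt : List Bool → List Bool := fun v => if h : v ∈ S then rt v h else [] with hRt
  have hmem : ∀ v ∈ S, Rt v ∈ roots S := by
    intro v hv; simp only [hRt, dif_pos hv]; exact (hrt v hv).1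
  rw [Finset.card_eq_sum_card_fiberwise hmem]
  refine Finset.sum_congr rfl (fun r hr => ?_)
  unfold hook
  congr 1
  ext v
  simp only [Finset.mem_filter, and_congr_right_iff]
  intro hv
  simp only [hRt, dif_pos hv]
  constructor
  · intro hpre; exact root_prefix_unique (hrt v hv).1 hr (hrt v hv).2 hpre
  · rintro rfl; exact (hrt v hv).2


/-- The top label. -/
def topF (S : Finset (List Bool)) (hn : 0 < S.card) : Fin S.card := ⟨S.card - 1, by omega⟩

/-- The vertex carrying the top label. -/
noncomputable def phi (S : Finset (List Bool)) (hn : 0 < S.card) (g : Lab S) : {p // p ∈ S} :=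
  Function.surjInv g.bij.surjective (topF S hn)

lemma phi_spec (S : Finset (List Bool)) (hn : 0 < S.card) (g : Lab S) :
    g.f (phi S hn g) = topF S hn :=
  Function.surjInv_eq g.bij.surjective _

lemma f_eq_top_iff (S : Finset (List Bool)) (hn : 0 < S.card) (g : Lab S) (u : {p // p ∈ S}) :
    g.f u = topF S hn ↔ u = phi S hn g := by
  constructor
  · intro h; exact g.bij.injective (h.trans (phi_spec S hn g).symm)
  · rintro rfl; exact phi_spec S hn g

lemma phi_mem_roots (S : Finset (List Bool)) (hn : 0 < S.card) (g : Lab S) :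
    (phi S hn g).1 ∈ roots S := by
  refine Finset.mem_filter.2 ⟨(phi S hn g).2, ?_⟩
  intro u hu hpre
  by_contra hne
  have hne' : (⟨u, hu⟩ : {p // p ∈ S}) ≠ phi S hn g := by
    intro h; exact hne (congrArg Subtype.val h)
  have hlt := g.anc ⟨u, hu⟩ (phi S hn g) hpre hne'
  rw [phi_spec S hn g] at hlt
  have h2 := (g.f ⟨u, hu⟩).2
  simp only [topF] at hlt
  omega

lemma card_erase_root {S : Finset (List Bool)} {r : List Bool} (hr : r ∈ roots S) :
    (S.erase r).card = S.card - 1 :=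
  Finset.card_erase_of_mem (roots_subset hr)

/-- Restriction of a labelling with top label at the root `r` to `S.erase r`. -/
noncomputable def restrictLab (S : Finset (List Bool)) (hn : 0 < S.card) {r : List Bool}
    (hr : r ∈ roots S) (g : Lab S) (hg : (phi S hn g).1 = r) : Lab (S.erase r) where
  f := fun u => ⟨(g.f ⟨u.1, Finset.mem_of_mem_erase u.2⟩).1, by
    have hm := card_erase_root hr
    have hne : g.f ⟨u.1, Finset.mem_of_mem_erase u.2⟩ ≠ topF S hn := by
      intro h
      have hp := (f_eq_top_iff S hn g ⟨u.1, Finset.mem_of_mem_erase u.2⟩).1 h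
      have hr2 : u.1 = r := by
        rw [show u.1 = (phi S hn g).1 from congrArg Subtype.val hp, hg]
      exact (Finset.mem_erase.1 u.2).1 hr2
    have h2 := (g.f ⟨u.1, Finset.mem_of_mem_erase u.2⟩).2
    have h3 : (g.f ⟨u.1, Finset.mem_of_mem_erase u.2⟩).1 ≠ S.card - 1 := by
      intro h; exact hne (Fin.ext h)
    omega⟩
  bij := by
    constructor
    · intro a b hab
      dsimp only at hab
      have h1 : g.f ⟨a.1, Finset.mem_of_mem_erase a.2⟩ = g.f ⟨b.1, Finset.mem_of_mem_erase b.2⟩ :=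
        Fin.ext (Fin.mk_eq_mk.1 hab)
      have h2 := g.bij.injective h1
      have h3 : a.1 = b.1 := Subtype.mk_eq_mk.1 h2
      exact Subtype.ext h3
    · intro y
      have hm := card_erase_root hr
      have hy : (y : ℕ) < S.card := by have := y.2; omega
      obtain ⟨u, hu⟩ := g.bij.surjective ⟨y.1, hy⟩
      have hur : u.1 ≠ r := by
        intro h
        have hu2 : u = phi S hn g := Subtype.ext (h.trans hg.symm)
        rw [hu2, phi_spec S hn g] at hu
        have hval := congrArg Fin.val hu
        simp only [topF] at hval
        have h2 := y.2
        omega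
      refine ⟨⟨u.1, Finset.mem_erase.2 ⟨hur, u.2⟩⟩, ?_⟩
      apply Fin.ext
      simpa using congrArg Fin.val hu
  anc := by
    intro u v hpre hne
    have hne' : (⟨u.1, Finset.mem_of_mem_erase u.2⟩ : {p // p ∈ S}) ≠
        ⟨v.1, Finset.mem_of_mem_erase v.2⟩ := by
      intro h
      have h3 : u.1 = v.1 := Subtype.mk_eq_mk.1 h
      exact hne (Subtype.ext h3)
    exact g.anc _ _ hpre hne'

/-- Extension of a labelling of `S.erase r` to `S`, putting the top label on `r`. -/
noncomputable def extendLab (S : Finset (List Bool)) (hn : 0 < S.card) {r : List Bool}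
    (hr : r ∈ roots S) (g' : Lab (S.erase r)) : Lab S where
  f := fun u => if h : u.1 = r then topF S hn else
    ⟨(g'.f ⟨u.1, Finset.mem_erase.2 ⟨h, u.2⟩⟩).1, by
      have hm := card_erase_root hr
      have h2 := (g'.f ⟨u.1, Finset.mem_erase.2 ⟨h, u.2⟩⟩).2
      omega⟩
  bij := by
    have hm := card_erase_root hr
    constructor
    · intro a b hab
      dsimp only at hab
      by_cases ha : a.1 = r <;> by_cases hb : b.1 = r
      · exact Subtype.ext (ha.trans hb.symm)
      · rw [dif_pos ha, dif_neg hb] at hab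
        have hval := congrArg Fin.val hab
        simp only [topF] at hval
        have h2 := (g'.f ⟨b.1, Finset.mem_erase.2 ⟨hb, b.2⟩⟩).2
        omega
      · rw [dif_neg ha, dif_pos hb] at hab
        have hval := congrArg Fin.val hab
        simp only [topF] at hval
        have h2 := (g'.f ⟨a.1, Finset.mem_erase.2 ⟨ha, a.2⟩⟩).2
        omega
      · rw [dif_neg ha, dif_neg hb] at hab
        have h1 : g'.f ⟨a.1, Finset.mem_erase.2 ⟨ha, a.2⟩⟩ =
            g'.f ⟨b.1, Finset.mem_erase.2 ⟨hb, b.2⟩⟩ := Fin.ext (Fin.mk_eq_mk.1 hab)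
        have h2 := g'.bij.injective h1
        have h3 : a.1 = b.1 := Subtype.mk_eq_mk.1 h2
        exact Subtype.ext h3
    · intro y
      by_cases hy : y = topF S hn
      · exact ⟨⟨r, roots_subset hr⟩, by simp [hy]⟩
      · have hy' : (y : ℕ) < (S.erase r).card := by
          have h2 := y.2
          have h3 : (y : ℕ) ≠ S.card - 1 := fun h => hy (Fin.ext h)
          omega
        obtain ⟨u, hu⟩ := g'.bij.surjective ⟨y.1, hy'⟩
        refine ⟨⟨u.1, Finset.mem_of_mem_erase u.2⟩, ?_⟩
        dsimp only
        rw [dif_neg (Finset.mem_erase.1 u.2).1]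
        apply Fin.ext
        simpa using congrArg Fin.val hu
  anc := by
    have hm := card_erase_root hr
    intro u v hpre hne
    have hvr : v.1 ≠ r := by
      intro h
      have hur : u.1 = r := root_prop hr u.1 u.2 (h ▸ hpre)
      exact hne (Subtype.ext (hur.trans h.symm))
    rw [dif_neg hvr]
    by_cases hur : u.1 = r
    · rw [dif_pos hur]
      simp only [topF]
      have h2 := (g'.f ⟨v.1, Finset.mem_erase.2 ⟨hvr, v.2⟩⟩).2
      omega
    · rw [dif_neg hur]
      have hne' : (⟨u.1, Finset.mem_erase.2 ⟨hur, u.2⟩⟩ : {p // p ∈ S.erase r}) ≠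
          ⟨v.1, Finset.mem_erase.2 ⟨hvr, v.2⟩⟩ := by
        intro h
        have h3 : u.1 = v.1 := Subtype.mk_eq_mk.1 h
        exact hne (Subtype.ext h3)
      exact g'.anc _ _ hpre hne'

lemma phi_extendLab (S : Finset (List Bool)) (hn : 0 < S.card) {r : List Bool}
    (hr : r ∈ roots S) (g' : Lab (S.erase r)) :
    (phi S hn (extendLab S hn hr g')).1 = r := by
  set g := extendLab S hn hr g' with hgdef
  by_contra h
  have hspec := phi_spec S hn g
  have heq : g.f (phi S hn g) =
      dite ((phi S hn g).1 = r) (fun _ => topF S hn) (fun h =>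
        ⟨(g'.f ⟨(phi S hn g).1, Finset.mem_erase.2 ⟨h, (phi S hn g).2⟩⟩).1, by
          have hm := card_erase_root hr
          have h2 := (g'.f ⟨(phi S hn g).1, Finset.mem_erase.2 ⟨h, (phi S hn g).2⟩⟩).2
          omega⟩) := rfl
  rw [hspec, dif_neg h] at heq
  have hval := congrArg Fin.val heq
  simp only [topF] at hval
  have hm := card_erase_root hr
  have h2 := (g'.f ⟨(phi S hn g).1, Finset.mem_erase.2 ⟨h, (phi S hn g).2⟩⟩).2
  omega

/-- The fiber of labellings with top vertex `r` is equivalent to labellings of `S.erase r`. -/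
noncomputable def fiberEquiv (S : Finset (List Bool)) (hn : 0 < S.card) {r : List Bool}
    (hr : r ∈ roots S) : {g : Lab S // (phi S hn g).1 = r} ≃ Lab (S.erase r) where
  toFun gp := restrictLab S hn hr gp.1 gp.2
  invFun g' := ⟨extendLab S hn hr g', phi_extendLab S hn hr g'⟩
  left_inv := by
    rintro ⟨g, hg⟩
    apply Subtype.ext
    apply Lab.ext'
    funext u
    show (extendLab S hn hr (restrictLab S hn hr g hg)).f u = g.f u
    simp only [extendLab]
    by_cases h : u.1 = r
    · rw [dif_pos h]
      have hu : u = phi S hn g := Subtype.ext (h.trans hg.symm)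
      rw [hu, phi_spec S hn g]
    · rw [dif_neg h]
      apply Fin.ext
      rfl
  right_inv := by
    intro g'
    apply Lab.ext'
    funext u
    apply Fin.ext
    show ((extendLab S hn hr g').f ⟨u.1, Finset.mem_of_mem_erase u.2⟩ : ℕ) = (g'.f u : ℕ)
    simp only [extendLab]
    rw [dif_neg (Finset.mem_erase.1 u.2).1]


lemma hook_erase {S : Finset (List Bool)} {r : List Bool} (hr : r ∈ roots S)
    {u : List Bool} (hu : u ∈ S.erase r) : hook (S.erase r) u = hook S u := by
  classical
  unfold hook
  congr 1
  ext v
  simp only [Finset.mem_filter, Finset.mem_erase]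
  constructor
  · rintro ⟨⟨hvr, hvS⟩, hpre⟩; exact ⟨hvS, hpre⟩
  · rintro ⟨hvS, hpre⟩
    refine ⟨⟨?_, hvS⟩, hpre⟩
    rintro rfl
    have := root_prop hr u (Finset.mem_of_mem_erase hu) hpre
    exact (Finset.mem_erase.1 hu).1 this

lemma card_lab_empty : Nat.card (Lab (∅ : Finset (List Bool))) = 1 := by
  have g0 : Lab (∅ : Finset (List Bool)) := by
    refine ⟨fun u => absurd u.2 (Finset.notMem_empty u.1), ⟨?_, ?_⟩, ?_⟩
    · intro a; exact absurd a.2 (Finset.notMem_empty a.1)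
    · intro y
      exact absurd y.2 (by simp)
    · intro u; exact absurd u.2 (Finset.notMem_empty u.1)
  haveI : Nonempty (Lab (∅ : Finset (List Bool))) := ⟨g0⟩
  haveI : Subsingleton (Lab (∅ : Finset (List Bool))) := by
    constructor
    intro a b
    apply Lab.ext'
    funext u
    exact absurd u.2 (Finset.notMem_empty u.1)
  exact Nat.card_unique

/-- Key lemma: the hook length formula for forests of lists. -/
lemma key_lemma (S : Finset (List Bool)) :
    Nat.card (Lab S) * ∏ u ∈ S, hook S u = S.card.factorial := by
  classical
  induction S using Finset.strongInduction with
  | _ S ih =>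
    rcases S.eq_empty_or_nonempty with rfl | hS
    · simp only [Finset.prod_empty, mul_one, Finset.card_empty, Nat.factorial_zero, card_lab_empty]
    · have hn : 0 < S.card := Finset.card_pos.2 hS
      -- decomposition of Lab S over the roots
      have hdecomp : Nat.card (Lab S) = ∑ r ∈ roots S, Nat.card (Lab (S.erase r)) := by
        have e1 : Lab S ≃ Σ r : {x // x ∈ roots S}, {g : Lab S // (phi S hn g).1 = r.1} := by
          refine (Equiv.sigmaFiberEquiv
            (fun g : Lab S => (⟨(phi S hn g).1, phi_mem_roots S hn g⟩ : {x // x ∈ roots S}))).symm.trans ?_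
          refine Equiv.sigmaCongrRight (fun r => Equiv.subtypeEquivRight (fun g => ?_))
          rw [Subtype.ext_iff]
        rw [Nat.card_congr e1]
        rw [Nat.card_eq_fintype_card, Fintype.card_sigma]
        rw [← Finset.sum_coe_sort (roots S) (fun r => Nat.card (Lab (S.erase r)))]
        refine Finset.sum_congr rfl (fun r _ => ?_)
        rw [← Nat.card_eq_fintype_card, Nat.card_congr (fiberEquiv S hn r.2)]
      rw [hdecomp, Finset.sum_mul]
      have step : ∀ r ∈ roots S,
          Nat.card (Lab (S.erase r)) * ∏ u ∈ S, hook S u = hook S r * (S.card - 1).factorial := by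
        intro r hr
        have hrS : r ∈ S := roots_subset hr
        have hprod : ∏ u ∈ S, hook S u = hook S r * ∏ u ∈ S.erase r, hook S u :=
          (Finset.mul_prod_erase S _ hrS).symm
        have hprod2 : ∏ u ∈ S.erase r, hook S u = ∏ u ∈ S.erase r, hook (S.erase r) u :=
          Finset.prod_congr rfl (fun u hu => (hook_erase hr hu).symm)
        have hih := ih (S.erase r) (Finset.erase_ssubset hrS)
        rw [card_erase_root hr] at hih
        calc Nat.card (Lab (S.erase r)) * ∏ u ∈ S, hook S u
            = hook S r * (Nat.card (Lab (S.erase r)) * ∏ u ∈ S.erase r, hook (S.erase r) u) := by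
              rw [hprod, hprod2]; ring
          _ = hook S r * (S.card - 1).factorial := by rw [hih]
      rw [Finset.sum_congr rfl step, ← Finset.sum_mul, sum_hook_roots]
      obtain ⟨m, hm⟩ : ∃ m, S.card = m + 1 := ⟨S.card - 1, by omega⟩
      rw [hm]
      simp [Nat.factorial_succ]

/-- A NAT is a pair of labellings. -/
def natEquiv (B : BT) : NAT B ≃ Lab B.leftVertices × Lab B.rightVertices where
  toFun n := (⟨n.fL, n.bijL, n.ancL⟩, ⟨n.fR, n.bijR, n.ancR⟩)
  invFun p := ⟨p.1.f, p.2.f, p.1.bij, p.2.bij, p.1.anc, p.2.anc⟩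
  left_inv n := rfl
  right_inv p := rfl

/-- hook-length formula for NATs of a fixed shape. -/
theorem nat_card_hook_formula (B : BT) (hB : B ≠ BT.nil) :
    (Nat.card (NAT B) : ℚ) =
      ((B.leftVertices.card.factorial * B.rightVertices.card.factorial : ℕ) : ℚ) /
        ((∏ u ∈ B.leftVertices, (EL B u : ℚ)) * (∏ u ∈ B.rightVertices, (ER B u : ℚ))) := by
  have hEL : ∀ u, EL B u = hook B.leftVertices u := fun u => rfl
  have hER : ∀ u, ER B u = hook B.rightVertices u := fun u => rfl
  have hL := key_lemma B.leftVertices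
  have hR := key_lemma B.rightVertices
  have hcard : Nat.card (NAT B) =
      Nat.card (Lab B.leftVertices) * Nat.card (Lab B.rightVertices) := by
    rw [Nat.card_congr (natEquiv B), Nat.card_prod]
  have hpL : (0 : ℚ) < ∏ u ∈ B.leftVertices, (EL B u : ℚ) := by
    apply Finset.prod_pos
    intro u hu
    exact_mod_cast hEL u ▸ hook_pos hu
  have hpR : (0 : ℚ) < ∏ u ∈ B.rightVertices, (ER B u : ℚ) := by
    apply Finset.prod_pos
    intro u hu
    exact_mod_cast hER u ▸ hook_pos hu
  rw [eq_div_iff (by positivity)]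
  push_cast
  rw [hcard]
  push_cast
  have eL : (∏ u ∈ B.leftVertices, (EL B u : ℚ)) =
      ((∏ u ∈ B.leftVertices, hook B.leftVertices u : ℕ) : ℚ) := by
    push_cast
    exact Finset.prod_congr rfl (fun u _ => by rw [hEL])
  have eR : (∏ u ∈ B.rightVertices, (ER B u : ℚ)) =
      ((∏ u ∈ B.rightVertices, hook B.rightVertices u : ℕ) : ℚ) := by
    push_cast
    exact Finset.prod_congr rfl (fun u _ => by rw [hER])
  rw [eL, eR]
  rw [show (Nat.card (Lab B.leftVertices) : ℚ) * (Nat.card (Lab B.rightVertices)) *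
      ((∏ u ∈ B.leftVertices, hook B.leftVertices u : ℕ) *
       (∏ u ∈ B.rightVertices, hook B.rightVertices u : ℕ)) =
      ((Nat.card (Lab B.leftVertices) * ∏ u ∈ B.leftVertices, hook B.leftVertices u : ℕ) : ℚ) *
      ((Nat.card (Lab B.rightVertices) * ∏ u ∈ B.rightVertices, hook B.rightVertices u : ℕ) : ℚ)
    by push_cast; ring]
  rw [hL, hR]
end

section
/- For all natural numbers w, h, the number of non-ambiguous trees of nonempty shape having exactly w left children and h right children equals Σ_{p≥1} (p−1)! · p! · S(w+1, p) · S(h+1, p), where S(n,p) is the Stirling number of the second kind (the sum is finite since S(n,p)=0 for p>n). -/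
/-- Stirling numbers of the second kind: `stirling2 n p` is the number of partitions of an
`n`-element set into `p` nonempty blocks (via the standard recurrence). -/
def stirling2 : ℕ → ℕ → ℕ
  | 0, 0 => 1
  | 0, _ + 1 => 0
  | _ + 1, 0 => 0
  | n + 1, p + 1 => (p + 1) * stirling2 n (p + 1) + stirling2 n p

namespace NCP
open Finset

lemma st_rec (n p : ℕ) : stirling2 (n+1) (p+1) = (p+1) * stirling2 n (p+1) + stirling2 n p := rfl

lemma st_zero_succ (p : ℕ) : stirling2 0 (p+1) = 0 := rfl

lemma st_succ_zero (n : ℕ) : stirling2 (n+1) 0 = 0 := rfl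

lemma st_zero_zero : stirling2 0 0 = 1 := rfl

lemma st_eq_zero_of_lt : ∀ {n p : ℕ}, n < p → stirling2 n p = 0
  | 0, 0, h => by omega
  | 0, p+1, _ => rfl
  | n+1, 0, h => by omega
  | n+1, p+1, h => by
      rw [st_rec, st_eq_zero_of_lt (by omega : n < p+1), st_eq_zero_of_lt (by omega : n < p)]
      ring

lemma st_one (n : ℕ) : stirling2 (n+1) 1 = 1 := by
  induction n with
  | zero => rfl
  | succ n ih => rw [st_rec, ih, st_succ_zero]

/-- Key convolution lemma: coefficientwise form of `eˣ uᵖ · u^q = eˣ u^(p+q)`, `u = eˣ-1`. -/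
lemma EU (w : ℕ) : ∀ p q : ℕ,
    ∑ a ∈ range (w+1), w.choose a * stirling2 (a+1) (p+1) * stirling2 (w-a) q
      = (p+q).choose p * stirling2 (w+1) (p+q+1) := by
  induction w with
  | zero =>
    intro p q
    rw [range_one, sum_singleton]
    cases q with
    | succ q =>
      rw [st_zero_succ, st_eq_zero_of_lt (by omega : 1 < p+(q+1)+1)]
      ring
    | zero =>
      cases p with
      | zero => rfl
      | succ p =>
        have h1 : stirling2 (0+1) (p+1+1) = 0 := st_eq_zero_of_lt (by omega)
        rw [h1]
        ring
  | succ w ih =>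
    intro p q
    rw [Finset.sum_range_succ']
    have hsplit : ∀ a ∈ range (w+1),
        (w+1).choose (a+1) * stirling2 (a+1+1) (p+1) * stirling2 (w+1-(a+1)) q
        = w.choose a * stirling2 (a+1+1) (p+1) * stirling2 (w-a) q
          + w.choose (a+1) * stirling2 (a+1+1) (p+1) * stirling2 (w+1-(a+1)) q := by
      intro a _
      rw [Nat.choose_succ_succ, add_mul, add_mul]
      congr 3
      omega
    rw [Finset.sum_congr rfl hsplit, Finset.sum_add_distrib]
    -- the g-sum: second pieces plus the a=0 term reassemble
    have hg : (∑ a ∈ range (w+1),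
          w.choose (a+1) * stirling2 (a+1+1) (p+1) * stirling2 (w+1-(a+1)) q)
        + (w+1).choose 0 * stirling2 (0+1) (p+1) * stirling2 (w+1-0) q
        = ∑ a ∈ range (w+1), w.choose a * stirling2 (a+1) (p+1) * stirling2 ((w-a)+1) q := by
      have h1 := Finset.sum_range_succ'
        (fun a => w.choose a * stirling2 (a+1) (p+1) * stirling2 (w+1-a) q) (w+1)
      rw [Finset.sum_range_succ _ (w+1)] at h1
      simp only [Nat.choose_succ_self, zero_mul, add_zero] at h1
      have h2 : (w+1).choose 0 * stirling2 (0+1) (p+1) * stirling2 (w+1-0) q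
          = w.choose 0 * stirling2 (0+1) (p+1) * stirling2 (w+1-0) q := by norm_num
      rw [h2, ← h1]
      apply Finset.sum_congr rfl
      intro a ha
      have : w + 1 - a = (w - a) + 1 := by
        simp only [mem_range] at ha; omega
      rw [this]
    rw [add_assoc, hg]
    -- Sum1 : expand stirling2 (a+1+1) (p+1)
    have hS1 : ∑ a ∈ range (w+1), w.choose a * stirling2 (a+1+1) (p+1) * stirling2 (w-a) q
        = (p+1) * ((p+q).choose p * stirling2 (w+1) (p+q+1))
          + ∑ a ∈ range (w+1), w.choose a * stirling2 (a+1) p * stirling2 (w-a) q := by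
      rw [← ih p q, Finset.mul_sum, ← Finset.sum_add_distrib]
      apply Finset.sum_congr rfl
      intro a _
      rw [st_rec (a+1) p]
      ring
    rw [hS1]
    cases q with
    | zero =>
      have h2 : ∑ a ∈ range (w+1),
          w.choose a * stirling2 (a+1) (p+1) * stirling2 ((w-a)+1) 0 = 0 :=
        Finset.sum_eq_zero fun a _ => by rw [st_succ_zero, mul_zero]
      rw [h2, add_zero]
      cases p with
      | zero =>
        have h1 : ∑ a ∈ range (w+1), w.choose a * stirling2 (a+1) 0 * stirling2 (w-a) 0 = 0 :=
          Finset.sum_eq_zero fun a _ => by rw [st_succ_zero]; ring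
        rw [h1, add_zero, st_one, st_one]
        rfl
      | succ p =>
        rw [ih p 0]
        simp only [Nat.add_zero, Nat.choose_self]
        rw [st_rec (w+1) (p+1)]
        ring
    | succ q =>
      have h2 : ∑ a ∈ range (w+1),
          w.choose a * stirling2 (a+1) (p+1) * stirling2 ((w-a)+1) (q+1)
          = (q+1) * ((p+(q+1)).choose p * stirling2 (w+1) (p+(q+1)+1))
            + (p+q).choose p * stirling2 (w+1) (p+q+1) := by
        rw [← ih p (q+1), ← ih p q, Finset.mul_sum, ← Finset.sum_add_distrib]
        apply Finset.sum_congr rfl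
        intro a _
        rw [st_rec (w-a) q]
        ring
      rw [h2]
      cases p with
      | zero =>
        have h1 : ∑ a ∈ range (w+1), w.choose a * stirling2 (a+1) 0 * stirling2 (w-a) (q+1) = 0 :=
          Finset.sum_eq_zero fun a _ => by rw [st_succ_zero]; ring
        rw [h1, add_zero]
        simp only [Nat.zero_add, Nat.choose_zero_right, one_mul]
        rw [st_rec (w+1) (q+1)]
        ring
      | succ p =>
        rw [ih p (q+1)]
        have e6 : p + (q+1) + 1 = p+q+1+1 := by omega
        have e7 : p + (q+1) = p+q+1 := by omega
        have e8 : p + 1 + q + 1 = p+q+1+1 := by omega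
        have e9 : p + 1 + q = p+q+1 := by omega
        have e10 : p+1+(q+1) = p+q+1+1 := by omega
        have e11 : p+1+(q+1)+1 = p+q+1+1+1 := by omega
        simp only [e10, e11, e6, e7, e8, e9]
        rw [st_rec (w+1) (p+q+1+1)]
        rw [Nat.choose_succ_succ (p+q+1) p]
        ring

end NCP

namespace ALG
open Finset NCP

def Ef (s w : ℕ) : ℕ := s.factorial * stirling2 (w+1) (s+1)
def Uf (s x : ℕ) : ℕ := s.factorial * stirling2 x s
def Mf (w h : ℕ) : ℕ := ∑ s ∈ range (w+1), (s+1) * (Ef s w * Ef s h)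
def lamf (a b : ℕ) : ℕ := ∑ s ∈ range (a+1), Ef s a * Uf s b
def rhof (a b : ℕ) : ℕ := ∑ s ∈ range (b+1), Uf s a * Ef s b

lemma Ef_eq_zero {s w : ℕ} (h : w < s) : Ef s w = 0 := by
  rw [Ef, st_eq_zero_of_lt (by omega), mul_zero]

lemma Uf_eq_zero {s x : ℕ} (h : x < s) : Uf s x = 0 := by
  rw [Uf, st_eq_zero_of_lt (by omega), mul_zero]

lemma Mf_alt (w h : ℕ) : Mf w h = ∑ s ∈ range (h+1), (s+1) * (Ef s w * Ef s h) := by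
  have h1 : Mf w h = ∑ s ∈ range (w+h+1), (s+1) * (Ef s w * Ef s h) := by
    apply Finset.sum_subset
    · intro x hx; simp only [mem_range] at hx ⊢; omega
    · intro x _ hx
      simp only [mem_range] at hx
      rw [Ef_eq_zero (show w < x by omega), zero_mul, mul_zero]
  have h2 : ∑ s ∈ range (h+1), (s+1) * (Ef s w * Ef s h)
      = ∑ s ∈ range (w+h+1), (s+1) * (Ef s w * Ef s h) := by
    apply Finset.sum_subset
    · intro x hx; simp only [mem_range] at hx ⊢; omega
    · intro x _ hx
      simp only [mem_range] at hx
      rw [Ef_eq_zero (show h < x by omega), mul_zero, mul_zero]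
  rw [h1, ← h2]

lemma convEU (w p q : ℕ) :
    ∑ a ∈ range (w+1), w.choose a * (Ef p a * Uf q (w-a)) = Ef (p+q) w := by
  have : ∀ a ∈ range (w+1), w.choose a * (Ef p a * Uf q (w-a))
      = (p.factorial * q.factorial) * (w.choose a * stirling2 (a+1) (p+1) * stirling2 (w-a) q) := by
    intro a _
    rw [Ef, Uf]; ring
  rw [Finset.sum_congr rfl this, ← Finset.mul_sum, EU w p q, Ef]
  have h := Nat.choose_mul_factorial_mul_factorial (Nat.le_add_right p q)
  have h2 : p + q - p = q := by omega
  rw [h2] at h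
  calc p.factorial * q.factorial * ((p+q).choose p * stirling2 (w+1) (p+q+1))
      = ((p+q).choose p * p.factorial * q.factorial) * stirling2 (w+1) (p+q+1) := by ring
    _ = (p+q).factorial * stirling2 (w+1) (p+q+1) := by rw [h]

lemma convUE (h p q : ℕ) :
    ∑ b ∈ range (h+1), h.choose b * (Uf p b * Ef q (h-b)) = Ef (p+q) h := by
  have hrefl := Finset.sum_range_reflect
    (fun b => h.choose b * (Uf p b * Ef q (h-b))) (h+1)
  rw [← hrefl]
  have : ∀ b ∈ range (h+1), h.choose (h+1-1-b) * (Uf p (h+1-1-b) * Ef q (h-(h+1-1-b)))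
      = h.choose b * (Ef q b * Uf p (h-b)) := by
    intro b hb
    simp only [mem_range] at hb
    have e1 : h + 1 - 1 - b = h - b := by omega
    have e2 : h - (h - b) = b := by omega
    rw [e1, e2, Nat.choose_symm (by omega : b ≤ h)]
    ring
  rw [Finset.sum_congr rfl this, convEU h q p, Nat.add_comm q p]

lemma sum_box (w h : ℕ) (G : ℕ → ℕ) (hGw : ∀ m, w < m → G m = 0) (hGh : ∀ m, h < m → G m = 0) :
    ∑ s ∈ range (w+1), ∑ t ∈ range (h+1), G (s+t) = ∑ m ∈ range (w+1), (m+1) * G m := by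
  rw [← Finset.sum_product']
  have hmaps : ∀ x ∈ range (w+1) ×ˢ range (h+1), x.1 + x.2 ∈ range (w+h+1) := by
    intro x hx
    simp only [mem_product, mem_range] at hx ⊢
    omega
  rw [← Finset.sum_fiberwise_of_maps_to hmaps (fun x => G (x.1 + x.2))]
  have key : ∀ m ∈ range (w+h+1),
      ∑ x ∈ (range (w+1) ×ˢ range (h+1)).filter (fun x => x.1 + x.2 = m), G (x.1+x.2)
        = (m+1) * G m := by
    intro m _
    have hconst : ∀ x ∈ (range (w+1) ×ˢ range (h+1)).filter (fun x => x.1 + x.2 = m),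
        G (x.1+x.2) = G m := by
      intro x hx
      simp only [mem_filter] at hx
      rw [hx.2]
    rw [Finset.sum_congr rfl hconst, Finset.sum_const, smul_eq_mul]
    by_cases hm : m ≤ w ∧ m ≤ h
    · congr 1
      have : (range (w+1) ×ˢ range (h+1)).filter (fun x => x.1 + x.2 = m)
          = (range (m+1)).image (fun s => (s, m - s)) := by
        ext x
        simp only [mem_filter, mem_product, mem_range, mem_image]
        constructor
        · rintro ⟨⟨h1, h2⟩, h3⟩
          exact ⟨x.1, by omega, by rw [Prod.ext_iff]; constructor <;> simp <;> omega⟩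
        · rintro ⟨s, hs, rfl⟩
          simp only
          omega
      rw [this, Finset.card_image_of_injective _ (fun a b hab => by
        simpa using congrArg Prod.fst hab), Finset.card_range]
    · have : G m = 0 := by
        rcases not_and_or.mp hm with h1 | h1
        · exact hGw m (by omega)
        · exact hGh m (by omega)
      rw [this, mul_zero, mul_zero]
  rw [Finset.sum_congr rfl key]
  symm
  apply Finset.sum_subset
  · intro x hx; simp only [mem_range] at hx ⊢; omega
  · intro x _ hx
    simp only [mem_range] at hx
    rw [hGw x (by omega), mul_zero]

/-- Core identity: `Mf` satisfies the convolution equation. -/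
lemma Mf_rec (w h : ℕ) :
    Mf w h = ∑ a ∈ range (w+1), ∑ b ∈ range (h+1),
      w.choose a * h.choose b * (lamf a b * rhof (w-a) (h-b)) := by
  -- expand lamf and rhof to uniform ranges
  have hlam : ∀ a ∈ range (w+1), ∀ b ∈ range (h+1),
      lamf a b = ∑ s ∈ range (w+1), Ef s a * Uf s b := by
    intro a ha _ _
    simp only [mem_range] at ha
    apply Finset.sum_subset
    · intro x hx; simp only [mem_range] at hx ⊢; omega
    · intro x _ hx
      simp only [mem_range] at hx
      rw [Ef_eq_zero (by omega), zero_mul]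
  have hrho : ∀ a ∈ range (w+1), ∀ b ∈ range (h+1),
      rhof (w-a) (h-b) = ∑ t ∈ range (h+1), Uf t (w-a) * Ef t (h-b) := by
    intro a _ b hb
    simp only [mem_range] at hb
    apply Finset.sum_subset
    · intro x hx; simp only [mem_range] at hx ⊢; omega
    · intro x _ hx
      simp only [mem_range] at hx
      rw [Ef_eq_zero (by omega), mul_zero]
  have step1 : ∑ a ∈ range (w+1), ∑ b ∈ range (h+1),
      w.choose a * h.choose b * (lamf a b * rhof (w-a) (h-b))
    = ∑ s ∈ range (w+1), ∑ t ∈ range (h+1),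
        (∑ a ∈ range (w+1), w.choose a * (Ef s a * Uf t (w-a)))
        * (∑ b ∈ range (h+1), h.choose b * (Uf s b * Ef t (h-b))) := by
    have lhs_eq : ∀ a ∈ range (w+1), ∀ b ∈ range (h+1),
        w.choose a * h.choose b * (lamf a b * rhof (w-a) (h-b))
        = ∑ s ∈ range (w+1), ∑ t ∈ range (h+1),
            (w.choose a * (Ef s a * Uf t (w-a))) * (h.choose b * (Uf s b * Ef t (h-b))) := by
      intro a ha b hb
      rw [hlam a ha b hb, hrho a ha b hb, Finset.sum_mul_sum]
      rw [Finset.mul_sum]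
      apply Finset.sum_congr rfl
      intro s _
      rw [Finset.mul_sum]
      apply Finset.sum_congr rfl
      intro t _
      ring
    calc ∑ a ∈ range (w+1), ∑ b ∈ range (h+1),
          w.choose a * h.choose b * (lamf a b * rhof (w-a) (h-b))
        = ∑ a ∈ range (w+1), ∑ b ∈ range (h+1), ∑ s ∈ range (w+1), ∑ t ∈ range (h+1),
            (w.choose a * (Ef s a * Uf t (w-a))) * (h.choose b * (Uf s b * Ef t (h-b))) := by
          apply Finset.sum_congr rfl; intro a ha
          apply Finset.sum_congr rfl; intro b hb
          exact lhs_eq a ha b hb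
      _ = ∑ a ∈ range (w+1), ∑ s ∈ range (w+1), ∑ t ∈ range (h+1), ∑ b ∈ range (h+1),
            (w.choose a * (Ef s a * Uf t (w-a))) * (h.choose b * (Uf s b * Ef t (h-b))) := by
          apply Finset.sum_congr rfl; intro a _
          rw [Finset.sum_comm]
          apply Finset.sum_congr rfl; intro s _
          rw [Finset.sum_comm]
      _ = ∑ s ∈ range (w+1), ∑ a ∈ range (w+1), ∑ t ∈ range (h+1), ∑ b ∈ range (h+1),
            (w.choose a * (Ef s a * Uf t (w-a))) * (h.choose b * (Uf s b * Ef t (h-b))) := by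
          rw [Finset.sum_comm]
      _ = ∑ s ∈ range (w+1), ∑ t ∈ range (h+1), ∑ a ∈ range (w+1), ∑ b ∈ range (h+1),
            (w.choose a * (Ef s a * Uf t (w-a))) * (h.choose b * (Uf s b * Ef t (h-b))) := by
          apply Finset.sum_congr rfl; intro s _
          rw [Finset.sum_comm]
      _ = ∑ s ∈ range (w+1), ∑ t ∈ range (h+1),
            (∑ a ∈ range (w+1), w.choose a * (Ef s a * Uf t (w-a)))
            * (∑ b ∈ range (h+1), h.choose b * (Uf s b * Ef t (h-b))) := by
          apply Finset.sum_congr rfl; intro s _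
          apply Finset.sum_congr rfl; intro t _
          rw [Finset.sum_mul_sum]
  rw [step1]
  have step2 : ∀ s ∈ range (w+1), ∀ t ∈ range (h+1),
      (∑ a ∈ range (w+1), w.choose a * (Ef s a * Uf t (w-a)))
      * (∑ b ∈ range (h+1), h.choose b * (Uf s b * Ef t (h-b)))
      = Ef (s+t) w * Ef (s+t) h := by
    intro s _ t _
    rw [convEU w s t, convUE h s t]
  have step2' : ∑ s ∈ range (w+1), ∑ t ∈ range (h+1),
      (∑ a ∈ range (w+1), w.choose a * (Ef s a * Uf t (w-a)))
      * (∑ b ∈ range (h+1), h.choose b * (Uf s b * Ef t (h-b)))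
      = ∑ s ∈ range (w+1), ∑ t ∈ range (h+1), Ef (s+t) w * Ef (s+t) h := by
    apply Finset.sum_congr rfl; intro s hs
    apply Finset.sum_congr rfl; intro t ht
    exact step2 s hs t ht
  rw [step2']
  have hbox := sum_box w h (fun m => Ef m w * Ef m h)
    (fun m hm => by rw [Ef_eq_zero hm, zero_mul])
    (fun m hm => by rw [Ef_eq_zero hm, mul_zero])
  rw [hbox]
  rfl

lemma st_zero_right (b : ℕ) : stirling2 b 0 = if b = 0 then 1 else 0 := by
  cases b with
  | zero => rfl
  | succ b => rfl

lemma lamf_eq (a b : ℕ) :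
    lamf a b = if a = 0 then (if b = 0 then 1 else 0) else Mf (a-1) b := by
  cases a with
  | zero =>
    simp only [lamf, range_one, sum_singleton]
    simp only [if_true]
    show Nat.factorial 0 * stirling2 1 1 * (Nat.factorial 0 * stirling2 b 0) = _
    rw [st_one 0, st_zero_right]
    simp
  | succ a =>
    simp only [Nat.succ_ne_zero, if_false, Nat.add_sub_cancel]
    -- LHS = T1 + T2
    have expand : ∀ s, Ef s (a+1) * Uf s b
        = (s+1) * (s.factorial * stirling2 (a+1) (s+1)) * (s.factorial * stirling2 b s)
          + (s.factorial * stirling2 (a+1) s) * (s.factorial * stirling2 b s) := by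
      intro s
      rw [Ef, Uf, st_rec (a+1) s]
      ring
    rw [lamf]
    rw [Finset.sum_congr rfl (fun s _ => expand s), Finset.sum_add_distrib]
    -- T1: drop the top term s = a+1
    have hT1 : ∑ s ∈ range (a+1+1),
        (s+1) * (s.factorial * stirling2 (a+1) (s+1)) * (s.factorial * stirling2 b s)
        = ∑ s ∈ range (a+1),
        (s+1) * (s.factorial * stirling2 (a+1) (s+1)) * (s.factorial * stirling2 b s) := by
      rw [Finset.sum_range_succ, st_eq_zero_of_lt (by omega : a+1 < a+1+1)]
      simp
    -- T2: peel the bottom term s = 0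
    have hT2 : ∑ s ∈ range (a+1+1),
        (s.factorial * stirling2 (a+1) s) * (s.factorial * stirling2 b s)
        = ∑ s ∈ range (a+1),
            ((s+1).factorial * stirling2 (a+1) (s+1)) * ((s+1).factorial * stirling2 b (s+1)) := by
      rw [Finset.sum_range_succ']
      rw [st_succ_zero]
      simp
    rw [hT1, hT2]
    rw [Mf, ← Finset.sum_add_distrib]
    apply Finset.sum_congr rfl
    intro s _
    rw [Ef, Ef, st_rec b s, Nat.factorial_succ]
    ring

lemma rhof_eq (a b : ℕ) :
    rhof a b = if b = 0 then (if a = 0 then 1 else 0) else Mf a (b-1) := by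
  cases b with
  | zero =>
    simp only [rhof, range_one, sum_singleton]
    simp only [if_true]
    show Nat.factorial 0 * stirling2 a 0 * (Nat.factorial 0 * stirling2 1 1) = _
    rw [st_one 0, st_zero_right]
    simp
  | succ b =>
    simp only [Nat.succ_ne_zero, if_false, Nat.add_sub_cancel]
    have expand : ∀ s, Uf s a * Ef s (b+1)
        = (s+1) * (s.factorial * stirling2 a s) * (s.factorial * stirling2 (b+1) (s+1))
          + (s.factorial * stirling2 a s) * (s.factorial * stirling2 (b+1) s) := by
      intro s
      rw [Ef, Uf, st_rec (b+1) s]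
      ring
    rw [rhof]
    rw [Finset.sum_congr rfl (fun s _ => expand s), Finset.sum_add_distrib]
    have hT1 : ∑ s ∈ range (b+1+1),
        (s+1) * (s.factorial * stirling2 a s) * (s.factorial * stirling2 (b+1) (s+1))
        = ∑ s ∈ range (b+1),
        (s+1) * (s.factorial * stirling2 a s) * (s.factorial * stirling2 (b+1) (s+1)) := by
      rw [Finset.sum_range_succ, st_eq_zero_of_lt (by omega : b+1 < b+1+1)]
      simp
    have hT2 : ∑ s ∈ range (b+1+1),
        (s.factorial * stirling2 a s) * (s.factorial * stirling2 (b+1) s)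
        = ∑ s ∈ range (b+1),
            ((s+1).factorial * stirling2 a (s+1)) * ((s+1).factorial * stirling2 (b+1) (s+1)) := by
      rw [Finset.sum_range_succ']
      rw [st_succ_zero]
      simp
    rw [hT1, hT2]
    rw [Mf_alt, ← Finset.sum_add_distrib]
    apply Finset.sum_congr rfl
    intro s _
    rw [Ef, Ef, st_rec a s, Nat.factorial_succ]
    ring

/-- The target sum in the theorem equals `Mf`. -/
lemma target_eq_Mf (w h : ℕ) :
    ∑ p ∈ Finset.Icc 1 (w + 1),
        (p - 1).factorial * p.factorial * stirling2 (w + 1) p * stirling2 (h + 1) p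
      = Mf w h := by
  rw [Mf]
  rw [show Finset.Icc 1 (w+1) = Finset.map ⟨fun s => s + 1, fun x y hxy => Nat.succ_injective hxy⟩ (range (w+1)) by
    ext x
    simp only [mem_Icc, Finset.mem_map, mem_range, Function.Embedding.coeFn_mk]
    constructor
    · rintro ⟨h1, h2⟩; exact ⟨x - 1, by omega, by show x - 1 + 1 = x; omega⟩
    · rintro ⟨s, hs, rfl⟩; show 1 ≤ s + 1 ∧ s + 1 ≤ w + 1; omega]
  rw [Finset.sum_map]
  apply Finset.sum_congr rfl
  intro s _
  change (s + 1 - 1).factorial * (s + 1).factorial * stirling2 (w + 1) (s + 1) * stirling2 (h + 1) (s + 1) = _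
  rw [Nat.add_sub_cancel]
  rw [Ef, Ef, Nat.factorial_succ]
  ring

end ALG

namespace NCP
open Finset BT

/-! ### Path API -/

lemma paths_nil : BT.nil.paths = [] := rfl

lemma paths_node (L R : BT) :
    (BT.node L R).paths = [] :: (L.paths.map (List.cons false) ++ R.paths.map (List.cons true)) :=
  rfl

lemma mem_paths_node {L R : BT} {p : List Bool} :
    p ∈ (BT.node L R).paths ↔
      p = [] ∨ (∃ q ∈ L.paths, p = false :: q) ∨ (∃ q ∈ R.paths, p = true :: q) := by
  simp only [paths_node, List.mem_cons, List.mem_append, List.mem_map]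
  constructor
  · rintro (h | (⟨q, hq, rfl⟩ | ⟨q, hq, rfl⟩))
    · exact Or.inl h
    · exact Or.inr (Or.inl ⟨q, hq, rfl⟩)
    · exact Or.inr (Or.inr ⟨q, hq, rfl⟩)
  · rintro (h | (⟨q, hq, rfl⟩ | ⟨q, hq, rfl⟩))
    · exact Or.inl h
    · exact Or.inr (Or.inl ⟨q, hq, rfl⟩)
    · exact Or.inr (Or.inr ⟨q, hq, rfl⟩)

lemma nil_mem_paths_iff {B : BT} : [] ∈ B.paths ↔ B ≠ BT.nil := by
  cases B with
  | nil => simp [paths_nil]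
  | node L R => simp [paths_node]

lemma getLast?_cons_ne_nil {x : Bool} {q : List Bool} (hq : q ≠ []) :
    (x :: q).getLast? = q.getLast? := by
  cases q with
  | nil => exact absurd rfl hq
  | cons y t => exact List.getLast?_cons_cons

lemma mem_LV_iff {B : BT} {p : List Bool} :
    p ∈ B.leftVertices ↔ p ∈ B.paths ∧ p.getLast? = some false := by
  simp [BT.leftVertices]

lemma mem_RV_iff {B : BT} {p : List Bool} :
    p ∈ B.rightVertices ↔ p ∈ B.paths ∧ p.getLast? = some true := by
  simp [BT.rightVertices]

lemma ne_nil_of_mem_LV {B : BT} {p : List Bool} (h : p ∈ B.leftVertices) : p ≠ [] := by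
  rw [mem_LV_iff] at h
  intro he; rw [he] at h; simp at h

lemma ne_nil_of_mem_RV {B : BT} {p : List Bool} (h : p ∈ B.rightVertices) : p ≠ [] := by
  rw [mem_RV_iff] at h
  intro he; rw [he] at h; simp at h

lemma B_ne_nil_of_mem_paths {B : BT} {p : List Bool} (h : p ∈ B.paths) : B ≠ BT.nil := by
  intro he; rw [he] at h; simp [paths_nil] at h

lemma mem_LV_node {L R : BT} {p : List Bool} :
    p ∈ (BT.node L R).leftVertices ↔
      (p = [false] ∧ L ≠ BT.nil) ∨ (∃ q ∈ L.leftVertices, p = false :: q)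
        ∨ (∃ q ∈ R.leftVertices, p = true :: q) := by
  rw [mem_LV_iff, mem_paths_node]
  constructor
  · rintro ⟨(rfl | (⟨q, hq, rfl⟩ | ⟨q, hq, rfl⟩)), hlast⟩
    · simp at hlast
    · by_cases hq0 : q = []
      · subst hq0
        exact Or.inl ⟨rfl, B_ne_nil_of_mem_paths hq⟩
      · rw [getLast?_cons_ne_nil hq0] at hlast
        exact Or.inr (Or.inl ⟨q, mem_LV_iff.mpr ⟨hq, hlast⟩, rfl⟩)
    · by_cases hq0 : q = []
      · subst hq0; simp at hlast
      · rw [getLast?_cons_ne_nil hq0] at hlast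
        exact Or.inr (Or.inr ⟨q, mem_LV_iff.mpr ⟨hq, hlast⟩, rfl⟩)
  · rintro ((⟨rfl, hL⟩) | (⟨q, hq, rfl⟩ | ⟨q, hq, rfl⟩))
    · exact ⟨Or.inr (Or.inl ⟨[], nil_mem_paths_iff.mpr hL, rfl⟩), rfl⟩
    · rw [mem_LV_iff] at hq
      exact ⟨Or.inr (Or.inl ⟨q, hq.1, rfl⟩),
        by rw [getLast?_cons_ne_nil (ne_nil_of_mem_LV (mem_LV_iff.mpr hq))]; exact hq.2⟩
    · rw [mem_LV_iff] at hq
      exact ⟨Or.inr (Or.inr ⟨q, hq.1, rfl⟩),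
        by rw [getLast?_cons_ne_nil (ne_nil_of_mem_LV (mem_LV_iff.mpr hq))]; exact hq.2⟩

lemma mem_RV_node {L R : BT} {p : List Bool} :
    p ∈ (BT.node L R).rightVertices ↔
      (p = [true] ∧ R ≠ BT.nil) ∨ (∃ q ∈ L.rightVertices, p = false :: q)
        ∨ (∃ q ∈ R.rightVertices, p = true :: q) := by
  rw [mem_RV_iff, mem_paths_node]
  constructor
  · rintro ⟨(rfl | (⟨q, hq, rfl⟩ | ⟨q, hq, rfl⟩)), hlast⟩
    · simp at hlast
    · by_cases hq0 : q = []
      · subst hq0; simp at hlast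
      · rw [getLast?_cons_ne_nil hq0] at hlast
        exact Or.inr (Or.inl ⟨q, mem_RV_iff.mpr ⟨hq, hlast⟩, rfl⟩)
    · by_cases hq0 : q = []
      · subst hq0
        exact Or.inl ⟨rfl, B_ne_nil_of_mem_paths hq⟩
      · rw [getLast?_cons_ne_nil hq0] at hlast
        exact Or.inr (Or.inr ⟨q, mem_RV_iff.mpr ⟨hq, hlast⟩, rfl⟩)
  · rintro ((⟨rfl, hR⟩) | (⟨q, hq, rfl⟩ | ⟨q, hq, rfl⟩))
    · exact ⟨Or.inr (Or.inr ⟨[], nil_mem_paths_iff.mpr hR, rfl⟩), rfl⟩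
    · rw [mem_RV_iff] at hq
      exact ⟨Or.inr (Or.inl ⟨q, hq.1, rfl⟩),
        by rw [getLast?_cons_ne_nil (ne_nil_of_mem_RV (mem_RV_iff.mpr hq))]; exact hq.2⟩
    · rw [mem_RV_iff] at hq
      exact ⟨Or.inr (Or.inr ⟨q, hq.1, rfl⟩),
        by rw [getLast?_cons_ne_nil (ne_nil_of_mem_RV (mem_RV_iff.mpr hq))]; exact hq.2⟩

lemma LV_nil : BT.nil.leftVertices = ∅ := rfl
lemma RV_nil : BT.nil.rightVertices = ∅ := rfl

/-- left subtree -/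
def bleft : BT → BT
  | .nil => .nil
  | .node l _ => l

def bright : BT → BT
  | .nil => .nil
  | .node _ r => r

lemma bt_eta {B : BT} (h : B ≠ BT.nil) : B = BT.node (bleft B) (bright B) := by
  cases B with
  | nil => exact absurd rfl h
  | node l r => rfl

end NCP

namespace NCP
open Finset BT

/-! ### Labeled NATs with arbitrary ℕ label sets -/

@[ext] structure LNAT (B : BT) (S T : Finset ℕ) where
  gL : List Bool → ℕ
  gR : List Bool → ℕ
  defL : ∀ p, p ∉ B.leftVertices → gL p = 0
  defR : ∀ p, p ∉ B.rightVertices → gR p = 0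
  mapsL : ∀ p ∈ B.leftVertices, gL p ∈ S
  mapsR : ∀ p ∈ B.rightVertices, gR p ∈ T
  injL : ∀ p ∈ B.leftVertices, ∀ q ∈ B.leftVertices, gL p = gL q → p = q
  injR : ∀ p ∈ B.rightVertices, ∀ q ∈ B.rightVertices, gR p = gR q → p = q
  surjL : ∀ s ∈ S, ∃ p ∈ B.leftVertices, gL p = s
  surjR : ∀ s ∈ T, ∃ p ∈ B.rightVertices, gR p = s
  ancL : ∀ u ∈ B.leftVertices, ∀ v ∈ B.leftVertices, u <+: v → u ≠ v → gL v < gL u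
  ancR : ∀ u ∈ B.rightVertices, ∀ v ∈ B.rightVertices, u <+: v → u ≠ v → gR v < gR u

lemma NAT.ext' {B : BT} {x y : NAT B} (h1 : x.fL = y.fL) (h2 : x.fR = y.fR) : x = y := by
  cases x; cases y
  cases h1; cases h2
  rfl

lemma LNAT.card_left {B : BT} {S T : Finset ℕ} (x : LNAT B S T) :
    B.leftVertices.card = S.card :=
  Finset.card_bij (fun p _ => x.gL p) x.mapsL x.injL
    (fun s hs => by obtain ⟨p, hp, hps⟩ := x.surjL s hs; exact ⟨p, hp, hps⟩)

lemma LNAT.card_right {B : BT} {S T : Finset ℕ} (x : LNAT B S T) :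
    B.rightVertices.card = T.card :=
  Finset.card_bij (fun p _ => x.gR p) x.mapsR x.injR
    (fun s hs => by obtain ⟨p, hp, hps⟩ := x.surjR s hs; exact ⟨p, hp, hps⟩)

/-- `NAT B` is equivalent to labeled NATs with labels `range w`, `range h`. -/
def natEquivLNAT (B : BT) {w h : ℕ} (hw : B.leftVertices.card = w)
    (hh : B.rightVertices.card = h) :
    NAT B ≃ LNAT B (Finset.range w) (Finset.range h) where
  toFun n :=
    { gL := fun p => if hp : p ∈ B.leftVertices then (n.fL ⟨p, hp⟩ : ℕ) else 0
      gR := fun p => if hp : p ∈ B.rightVertices then (n.fR ⟨p, hp⟩ : ℕ) else 0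
      defL := fun p hp => dif_neg hp
      defR := fun p hp => dif_neg hp
      mapsL := fun p hp => by
        simp only [dif_pos hp, Finset.mem_range, ← hw]; exact (n.fL ⟨p, hp⟩).2
      mapsR := fun p hp => by
        simp only [dif_pos hp, Finset.mem_range, ← hh]; exact (n.fR ⟨p, hp⟩).2
      injL := fun p hp q hq he => by
        simp only [dif_pos hp, dif_pos hq] at he
        have := n.bijL.1 (Fin.ext he : n.fL ⟨p, hp⟩ = n.fL ⟨q, hq⟩)
        exact congrArg Subtype.val this
      injR := fun p hp q hq he => by
        simp only [dif_pos hp, dif_pos hq] at he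
        have := n.bijR.1 (Fin.ext he : n.fR ⟨p, hp⟩ = n.fR ⟨q, hq⟩)
        exact congrArg Subtype.val this
      surjL := fun s hs => by
        rw [Finset.mem_range, ← hw] at hs
        obtain ⟨p, hp⟩ := n.bijL.2 ⟨s, hs⟩
        exact ⟨p.1, p.2, by simp only [dif_pos p.2]; exact congrArg Fin.val hp⟩
      surjR := fun s hs => by
        rw [Finset.mem_range, ← hh] at hs
        obtain ⟨p, hp⟩ := n.bijR.2 ⟨s, hs⟩
        exact ⟨p.1, p.2, by simp only [dif_pos p.2]; exact congrArg Fin.val hp⟩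
      ancL := fun u hu v hv hpre hne => by
        simp only [dif_pos hu, dif_pos hv]
        exact n.ancL ⟨u, hu⟩ ⟨v, hv⟩ hpre (fun hc => hne (congrArg Subtype.val hc))
      ancR := fun u hu v hv hpre hne => by
        simp only [dif_pos hu, dif_pos hv]
        exact n.ancR ⟨u, hu⟩ ⟨v, hv⟩ hpre (fun hc => hne (congrArg Subtype.val hc)) }
  invFun m :=
    { fL := fun p => ⟨m.gL p.1, by rw [hw]; exact Finset.mem_range.mp (m.mapsL p.1 p.2)⟩
      fR := fun p => ⟨m.gR p.1, by rw [hh]; exact Finset.mem_range.mp (m.mapsR p.1 p.2)⟩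
      bijL := by
        constructor
        · intro p q he
          exact Subtype.ext (m.injL p.1 p.2 q.1 q.2 (congrArg Fin.val he))
        · intro k
          have hk : (k : ℕ) ∈ Finset.range w := Finset.mem_range.mpr (by rw [← hw]; exact k.2)
          obtain ⟨p, hp, hps⟩ := m.surjL k hk
          exact ⟨⟨p, hp⟩, Fin.ext hps⟩
      bijR := by
        constructor
        · intro p q he
          exact Subtype.ext (m.injR p.1 p.2 q.1 q.2 (congrArg Fin.val he))
        · intro k
          have hk : (k : ℕ) ∈ Finset.range h := Finset.mem_range.mpr (by rw [← hh]; exact k.2)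
          obtain ⟨p, hp, hps⟩ := m.surjR k hk
          exact ⟨⟨p, hp⟩, Fin.ext hps⟩
      ancL := fun u v hpre hne =>
        m.ancL u.1 u.2 v.1 v.2 hpre (fun hc => hne (Subtype.ext hc))
      ancR := fun u v hpre hne =>
        m.ancR u.1 u.2 v.1 v.2 hpre (fun hc => hne (Subtype.ext hc)) }
  left_inv n := by
    apply NAT.ext'
    · funext p
      apply Fin.ext
      simp only [dif_pos p.2]
    · funext p
      apply Fin.ext
      simp only [dif_pos p.2]
  right_inv m := by
    ext p
    · by_cases hp : p ∈ B.leftVertices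
      · simp only [dif_pos hp]
      · simp only [dif_neg hp]; exact (m.defL p hp).symm
    · by_cases hp : p ∈ B.rightVertices
      · simp only [dif_pos hp]
      · simp only [dif_neg hp]; exact (m.defR p hp).symm

/-- order isomorphism between two finsets of the same cardinality -/
def fIso (S S' : Finset ℕ) (h : S.card = S'.card) : {x // x ∈ S} ≃o {x // x ∈ S'} :=
  (S.orderIsoOfFin rfl).symm.trans (S'.orderIsoOfFin h.symm)

/-- Transport an `LNAT` along order isomorphisms of the label sets. -/
def LNAT.relabel {B : BT} {S T S' T' : Finset ℕ}
    (eL : {x // x ∈ S} ≃o {x // x ∈ S'}) (eR : {x // x ∈ T} ≃o {x // x ∈ T'})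
    (x : LNAT B S T) : LNAT B S' T' where
  gL := fun p => if hp : p ∈ B.leftVertices then (eL ⟨x.gL p, x.mapsL p hp⟩ : ℕ) else 0
  gR := fun p => if hp : p ∈ B.rightVertices then (eR ⟨x.gR p, x.mapsR p hp⟩ : ℕ) else 0
  defL := fun p hp => dif_neg hp
  defR := fun p hp => dif_neg hp
  mapsL := fun p hp => by simp only [dif_pos hp]; exact (eL _).2
  mapsR := fun p hp => by simp only [dif_pos hp]; exact (eR _).2
  injL := fun p hp q hq he => by
    simp only [dif_pos hp, dif_pos hq] at he
    have h2 := eL.injective (Subtype.ext he)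
    exact x.injL p hp q hq (congrArg Subtype.val h2)
  injR := fun p hp q hq he => by
    simp only [dif_pos hp, dif_pos hq] at he
    have h2 := eR.injective (Subtype.ext he)
    exact x.injR p hp q hq (congrArg Subtype.val h2)
  surjL := fun s hs => by
    obtain ⟨p, hp, hps⟩ := x.surjL (eL.symm ⟨s, hs⟩).1 (eL.symm ⟨s, hs⟩).2
    refine ⟨p, hp, ?_⟩
    simp only [dif_pos hp]
    have h3 : (⟨x.gL p, x.mapsL p hp⟩ : {x // x ∈ S}) = eL.symm ⟨s, hs⟩ := Subtype.ext hps
    rw [h3, OrderIso.apply_symm_apply]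
  surjR := fun s hs => by
    obtain ⟨p, hp, hps⟩ := x.surjR (eR.symm ⟨s, hs⟩).1 (eR.symm ⟨s, hs⟩).2
    refine ⟨p, hp, ?_⟩
    simp only [dif_pos hp]
    have h3 : (⟨x.gR p, x.mapsR p hp⟩ : {x // x ∈ T}) = eR.symm ⟨s, hs⟩ := Subtype.ext hps
    rw [h3, OrderIso.apply_symm_apply]
  ancL := fun u hu v hv hpre hne => by
    simp only [dif_pos hu, dif_pos hv]
    have := x.ancL u hu v hv hpre hne
    exact eL.strictMono (Subtype.mk_lt_mk.mpr this)
  ancR := fun u hu v hv hpre hne => by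
    simp only [dif_pos hu, dif_pos hv]
    have := x.ancR u hu v hv hpre hne
    exact eR.strictMono (Subtype.mk_lt_mk.mpr this)

/-- helper -/
lemma symm_coe_left {S S' : Finset ℕ} (e : {x // x ∈ S} ≃o {x // x ∈ S'})
    (z : {x // x ∈ S}) (h' : (e z : ℕ) ∈ S') : (e.symm ⟨(e z : ℕ), h'⟩ : ℕ) = z := by
  rw [show (⟨((e z) : ℕ), h'⟩ : {x // x ∈ S'}) = e z from Subtype.ext rfl,
    OrderIso.symm_apply_apply]

lemma app_symm_coe {S S' : Finset ℕ} (e : {x // x ∈ S} ≃o {x // x ∈ S'})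
    (z : {x // x ∈ S'}) (h' : (e.symm z : ℕ) ∈ S) : (e ⟨(e.symm z : ℕ), h'⟩ : ℕ) = z := by
  rw [show (⟨((e.symm z) : ℕ), h'⟩ : {x // x ∈ S}) = e.symm z from Subtype.ext rfl,
    OrderIso.apply_symm_apply]

/-- relabeling is an equivalence -/
def LNAT.relabelEquiv {B : BT} {S T S' T' : Finset ℕ}
    (eL : {x // x ∈ S} ≃o {x // x ∈ S'}) (eR : {x // x ∈ T} ≃o {x // x ∈ T'}) :
    LNAT B S T ≃ LNAT B S' T' where
  toFun := LNAT.relabel eL eR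
  invFun := LNAT.relabel eL.symm eR.symm
  left_inv x := by
    ext p
    · by_cases hp : p ∈ B.leftVertices
      · simp only [LNAT.relabel, dif_pos hp]
        exact symm_coe_left eL ⟨x.gL p, x.mapsL p hp⟩ _
      · simp only [LNAT.relabel, dif_neg hp]
        exact (x.defL p hp).symm
    · by_cases hp : p ∈ B.rightVertices
      · simp only [LNAT.relabel, dif_pos hp]
        exact symm_coe_left eR ⟨x.gR p, x.mapsR p hp⟩ _
      · simp only [LNAT.relabel, dif_neg hp]
        exact (x.defR p hp).symm
  right_inv x := by
    ext p
    · by_cases hp : p ∈ B.leftVertices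
      · simp only [LNAT.relabel, dif_pos hp]
        exact app_symm_coe eL ⟨x.gL p, x.mapsL p hp⟩ _
      · simp only [LNAT.relabel, dif_neg hp]
        exact (x.defL p hp).symm
    · by_cases hp : p ∈ B.rightVertices
      · simp only [LNAT.relabel, dif_pos hp]
        exact app_symm_coe eR ⟨x.gR p, x.mapsR p hp⟩ _
      · simp only [LNAT.relabel, dif_neg hp]
        exact (x.defR p hp).symm

end NCP

namespace NCP
open Finset BT

/-! ### Facts for the splitting -/

lemma node_ne_nil {L R : BT} : BT.node L R ≠ BT.nil := fun h => BT.noConfusion h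

lemma LV_left_mem {B : BT} {q : List Bool} (hq : q ∈ (bleft B).leftVertices) :
    (false :: q) ∈ B.leftVertices := by
  cases B with
  | nil => simp [bleft, LV_nil] at hq
  | node L R => exact mem_LV_node.mpr (Or.inr (Or.inl ⟨q, hq, rfl⟩))

lemma LV_right_mem {B : BT} {q : List Bool} (hq : q ∈ (bright B).leftVertices) :
    (true :: q) ∈ B.leftVertices := by
  cases B with
  | nil => simp [bright, LV_nil] at hq
  | node L R => exact mem_LV_node.mpr (Or.inr (Or.inr ⟨q, hq, rfl⟩))

lemma RV_left_mem {B : BT} {q : List Bool} (hq : q ∈ (bleft B).rightVertices) :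
    (false :: q) ∈ B.rightVertices := by
  cases B with
  | nil => simp [bleft, RV_nil] at hq
  | node L R => exact mem_RV_node.mpr (Or.inr (Or.inl ⟨q, hq, rfl⟩))

lemma RV_right_mem {B : BT} {q : List Bool} (hq : q ∈ (bright B).rightVertices) :
    (true :: q) ∈ B.rightVertices := by
  cases B with
  | nil => simp [bright, RV_nil] at hq
  | node L R => exact mem_RV_node.mpr (Or.inr (Or.inr ⟨q, hq, rfl⟩))

lemma false_mem_LV {B : BT} (hB : B ≠ BT.nil) (hL : bleft B ≠ BT.nil) :
    [false] ∈ B.leftVertices := by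
  cases B with
  | nil => exact absurd rfl hB
  | node L R => exact mem_LV_node.mpr (Or.inl ⟨rfl, hL⟩)

lemma true_mem_RV {B : BT} (hB : B ≠ BT.nil) (hR : bright B ≠ BT.nil) :
    [true] ∈ B.rightVertices := by
  cases B with
  | nil => exact absurd rfl hB
  | node L R => exact mem_RV_node.mpr (Or.inl ⟨rfl, hR⟩)

lemma LV_cases {B : BT} {p : List Bool} (hp : p ∈ B.leftVertices) :
    (p = [false] ∧ bleft B ≠ BT.nil) ∨ (∃ q ∈ (bleft B).leftVertices, p = false :: q)
      ∨ (∃ q ∈ (bright B).leftVertices, p = true :: q) := by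
  cases B with
  | nil => simp [LV_nil] at hp
  | node L R => exact mem_LV_node.mp hp

lemma RV_cases {B : BT} {p : List Bool} (hp : p ∈ B.rightVertices) :
    (p = [true] ∧ bright B ≠ BT.nil) ∨ (∃ q ∈ (bleft B).rightVertices, p = false :: q)
      ∨ (∃ q ∈ (bright B).rightVertices, p = true :: q) := by
  cases B with
  | nil => simp [RV_nil] at hp
  | node L R => exact mem_RV_node.mp hp

/-! ### sdrop -/

def sdrop (S : Finset ℕ) : Finset ℕ := S.erase (S.sup id)

lemma sdrop_subset (S : Finset ℕ) : sdrop S ⊆ S := Finset.erase_subset _ _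

lemma sup_mem {S : Finset ℕ} (hS : S.Nonempty) : S.sup id ∈ S := by
  obtain ⟨b, hb, hbs⟩ := Finset.exists_mem_eq_sup S hS id
  rw [hbs]; exact hb

lemma lt_sup_of_mem_sdrop {S : Finset ℕ} {s : ℕ} (hs : s ∈ sdrop S) : s < S.sup id := by
  rw [sdrop, Finset.mem_erase] at hs
  exact lt_of_le_of_ne (Finset.le_sup (f := id) hs.2) hs.1

lemma mem_sdrop_of_lt {S : Finset ℕ} {s : ℕ} (hs : s ∈ S) (h : s < S.sup id) :
    s ∈ sdrop S := by
  rw [sdrop, Finset.mem_erase]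
  exact ⟨by omega, hs⟩

lemma insert_sup_sdrop {S : Finset ℕ} (hS : S.Nonempty) :
    insert (S.sup id) (sdrop S) = S := Finset.insert_erase (sup_mem hS)

lemma sdrop_empty : sdrop ∅ = ∅ := rfl

lemma sup_empty_eq : (∅ : Finset ℕ).sup id = 0 := rfl

end NCP

namespace NCP
open Finset BT

section Split
variable {w h : ℕ} {S T : Finset ℕ} {B : BT}

/-- abbreviation for the set of labels used in the left branch -/
def PhiS (B : BT) (g : LNAT B (Finset.range w) (Finset.range h)) : Finset ℕ :=
  (B.leftVertices.filter (fun p => p.head? = some false)).image g.gL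

def PhiT (B : BT) (g : LNAT B (Finset.range w) (Finset.range h)) : Finset ℕ :=
  (B.rightVertices.filter (fun p => p.head? = some false)).image g.gR

variable (g : LNAT B (Finset.range w) (Finset.range h))

lemma mem_PhiS {s : ℕ} :
    s ∈ PhiS B g ↔ ∃ p ∈ B.leftVertices, p.head? = some false ∧ g.gL p = s := by
  simp only [PhiS, Finset.mem_image, Finset.mem_filter]
  constructor
  · rintro ⟨p, ⟨h1, h2⟩, h3⟩; exact ⟨p, h1, h2, h3⟩
  · rintro ⟨p, h1, h2, h3⟩; exact ⟨p, ⟨h1, h2⟩, h3⟩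

lemma mem_PhiT {s : ℕ} :
    s ∈ PhiT B g ↔ ∃ p ∈ B.rightVertices, p.head? = some false ∧ g.gR p = s := by
  simp only [PhiT, Finset.mem_image, Finset.mem_filter]
  constructor
  · rintro ⟨p, ⟨h1, h2⟩, h3⟩; exact ⟨p, h1, h2, h3⟩
  · rintro ⟨p, h1, h2, h3⟩; exact ⟨p, ⟨h1, h2⟩, h3⟩

lemma bleft_ne_nil_of_false_mem (hp : [false] ∈ B.leftVertices) : bleft B ≠ BT.nil := by
  rcases LV_cases hp with ⟨_, hL⟩ | ⟨q, hq, he⟩ | ⟨q, hq, he⟩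
  · exact hL
  · exact absurd (List.cons.injEq .. ▸ he) (by
      intro hcon
      exact ne_nil_of_mem_LV hq ((List.cons.injEq .. ▸ he).2.symm))
  · exact absurd he (by simp)

lemma bright_ne_nil_of_true_mem (hp : [true] ∈ B.rightVertices) : bright B ≠ BT.nil := by
  rcases RV_cases hp with ⟨_, hR⟩ | ⟨q, hq, he⟩ | ⟨q, hq, he⟩
  · exact hR
  · exact absurd he (by simp)
  · exact absurd he (by
      intro hcon
      exact ne_nil_of_mem_RV hq ((List.cons.injEq .. ▸ hcon).2.symm))

lemma gL_lt_root {q : List Bool} (hfq : (false :: q) ∈ B.leftVertices) (hq0 : q ≠ [])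
    (hfalse : [false] ∈ B.leftVertices) : g.gL (false :: q) < g.gL [false] :=
  g.ancL [false] hfalse (false :: q) hfq ⟨q, rfl⟩
    (by intro hcon; exact hq0 ((List.cons.injEq .. ▸ hcon).2.symm))

lemma gR_lt_root {q : List Bool} (hfq : (true :: q) ∈ B.rightVertices) (hq0 : q ≠ [])
    (htrue : [true] ∈ B.rightVertices) : g.gR (true :: q) < g.gR [true] :=
  g.ancR [true] htrue (true :: q) hfq ⟨q, rfl⟩
    (by intro hcon; exact hq0 ((List.cons.injEq .. ▸ hcon).2.symm))

/-- the root of the left branch carries the sup of the left-branch labels -/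
lemma gL_root_eq_sup (hL : bleft B ≠ BT.nil) : g.gL [false] = (PhiS B g).sup id := by
  have hB : B ≠ BT.nil := by
    intro hn; rw [hn] at hL; exact hL rfl
  have hmem : [false] ∈ B.leftVertices := false_mem_LV hB hL
  have hin : g.gL [false] ∈ PhiS B g := mem_PhiS g |>.mpr ⟨[false], hmem, rfl, rfl⟩
  apply le_antisymm
  · exact Finset.le_sup (f := id) hin
  · apply Finset.sup_le
    intro s hs
    obtain ⟨p, hp, hh, hv⟩ := mem_PhiS g |>.mp hs
    rcases LV_cases hp with ⟨rfl, _⟩ | ⟨q, hq, rfl⟩ | ⟨q, hq, rfl⟩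
    · rw [← hv]; exact le_rfl
    · rw [← hv]
      exact le_of_lt (gL_lt_root g hp (ne_nil_of_mem_LV hq) hmem)
    · simp at hh

lemma gR_root_eq_sup (hR : bright B ≠ BT.nil) :
    g.gR [true] = ((Finset.range h) \ PhiT B g).sup id := by
  have hB : B ≠ BT.nil := by
    intro hn; rw [hn] at hR; exact hR rfl
  have hmem : [true] ∈ B.rightVertices := true_mem_RV hB hR
  have hin : g.gR [true] ∈ (Finset.range h) \ PhiT B g := by
    rw [Finset.mem_sdiff]
    refine ⟨g.mapsR _ hmem, ?_⟩
    intro hcon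
    obtain ⟨p, hp, hh, hv⟩ := mem_PhiT g |>.mp hcon
    have := g.injR p hp [true] hmem hv
    rw [this] at hh
    simp at hh
  apply le_antisymm
  · exact Finset.le_sup (f := id) hin
  · apply Finset.sup_le
    intro s hs
    rw [Finset.mem_sdiff] at hs
    obtain ⟨p, hp, hv⟩ := g.surjR s hs.1
    rcases RV_cases hp with ⟨rfl, _⟩ | ⟨q, hq, rfl⟩ | ⟨q, hq, rfl⟩
    · rw [← hv]; exact le_rfl
    · exact absurd (mem_PhiT g |>.mpr ⟨false :: q, hp, rfl, hv⟩) hs.2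
    · rw [← hv]
      exact le_of_lt (gR_lt_root g hp (ne_nil_of_mem_RV hq) hmem)

lemma left_nil_iff (hB : B ≠ BT.nil) : bleft B = BT.nil ↔ PhiS B g = ∅ := by
  constructor
  · intro hL
    rw [Finset.eq_empty_iff_forall_notMem]
    intro s hs
    obtain ⟨p, hp, hh, hv⟩ := mem_PhiS g |>.mp hs
    rcases LV_cases hp with ⟨rfl, hne⟩ | ⟨q, hq, rfl⟩ | ⟨q, hq, rfl⟩
    · exact hne hL
    · rw [hL] at hq; simp [LV_nil] at hq
    · simp at hh
  · intro hS
    by_contra hL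
    have := mem_PhiS g |>.mpr ⟨[false], false_mem_LV hB hL, rfl, rfl⟩
    rw [hS] at this
    simp at this

lemma right_nil_iff (hB : B ≠ BT.nil) :
    bright B = BT.nil ↔ (Finset.range h) \ PhiT B g = ∅ := by
  constructor
  · intro hR
    rw [Finset.sdiff_eq_empty_iff_subset]
    intro s hs
    obtain ⟨p, hp, hv⟩ := g.surjR s hs
    rcases RV_cases hp with ⟨rfl, hne⟩ | ⟨q, hq, rfl⟩ | ⟨q, hq, rfl⟩
    · exact absurd hR hne
    · exact mem_PhiT g |>.mpr ⟨false :: q, hp, rfl, hv⟩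
    · rw [hR] at hq; simp [RV_nil] at hq
  · intro hT
    by_contra hR
    have hmem : [true] ∈ B.rightVertices := true_mem_RV hB hR
    have h1 : g.gR [true] ∈ Finset.range h := g.mapsR _ hmem
    have h2 : g.gR [true] ∉ (Finset.range h) \ PhiT B g := by rw [hT]; simp
    rw [Finset.mem_sdiff] at h2
    push_neg at h2
    obtain ⟨p, hp, hh, hv⟩ := mem_PhiT g |>.mp (h2 h1)
    have := g.injR p hp [true] hmem hv
    rw [this] at hh
    simp at hh

end Split
end NCP

namespace NCP
open Finset BT

section Split2
variable {w h : ℕ} {B : BT}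

/-- the left part of a split NAT -/
def fwdL (g : LNAT B (Finset.range w) (Finset.range h)) :
    LNAT (bleft B) (sdrop (PhiS B g)) (PhiT B g) where
  gL := fun q => if q ∈ (bleft B).leftVertices then g.gL (false :: q) else 0
  gR := fun q => if q ∈ (bleft B).rightVertices then g.gR (false :: q) else 0
  defL := fun p hp => if_neg hp
  defR := fun p hp => if_neg hp
  mapsL := fun q hq => by
    simp only [if_pos hq]
    have hfq : (false :: q) ∈ B.leftVertices := LV_left_mem hq
    have hL : bleft B ≠ BT.nil := by
      intro hn; rw [hn] at hq; simp [LV_nil] at hq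
    apply mem_sdrop_of_lt
    · exact mem_PhiS g |>.mpr ⟨false :: q, hfq, rfl, rfl⟩
    · rw [← gL_root_eq_sup g hL]
      have hB : B ≠ BT.nil := by intro hn; rw [hn] at hL; exact hL rfl
      exact gL_lt_root g hfq (ne_nil_of_mem_LV hq) (false_mem_LV hB hL)
  mapsR := fun q hq => by
    simp only [if_pos hq]
    exact mem_PhiT g |>.mpr ⟨false :: q, RV_left_mem hq, rfl, rfl⟩
  injL := fun p hp q hq he => by
    simp only [if_pos hp, if_pos hq] at he
    have := g.injL _ (LV_left_mem hp) _ (LV_left_mem hq) he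
    exact (List.cons.injEq .. ▸ this).2
  injR := fun p hp q hq he => by
    simp only [if_pos hp, if_pos hq] at he
    have := g.injR _ (RV_left_mem hp) _ (RV_left_mem hq) he
    exact (List.cons.injEq .. ▸ this).2
  surjL := fun s hs => by
    have hs' := sdrop_subset _ hs
    obtain ⟨p, hp, hh, hv⟩ := mem_PhiS g |>.mp hs'
    rcases LV_cases hp with ⟨rfl, hne⟩ | ⟨q, hq, rfl⟩ | ⟨q, hq, rfl⟩
    · exfalso
      rw [gL_root_eq_sup g hne] at hv
      rw [← hv] at hs
      exact (Finset.notMem_erase _ _) hs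
    · exact ⟨q, hq, by simp only [if_pos hq]; exact hv⟩
    · simp at hh
  surjR := fun s hs => by
    obtain ⟨p, hp, hh, hv⟩ := mem_PhiT g |>.mp hs
    rcases RV_cases hp with ⟨rfl, hne⟩ | ⟨q, hq, rfl⟩ | ⟨q, hq, rfl⟩
    · simp at hh
    · exact ⟨q, hq, by simp only [if_pos hq]; exact hv⟩
    · simp at hh
  ancL := fun u hu v hv hpre hne => by
    simp only [if_pos hu, if_pos hv]
    exact g.ancL _ (LV_left_mem hu) _ (LV_left_mem hv)
      (List.cons_prefix_cons.mpr ⟨rfl, hpre⟩)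
      (fun hc => hne ((List.cons.injEq .. ▸ hc).2))
  ancR := fun u hu v hv hpre hne => by
    simp only [if_pos hu, if_pos hv]
    exact g.ancR _ (RV_left_mem hu) _ (RV_left_mem hv)
      (List.cons_prefix_cons.mpr ⟨rfl, hpre⟩)
      (fun hc => hne ((List.cons.injEq .. ▸ hc).2))

/-- the right part of a split NAT -/
def fwdR (g : LNAT B (Finset.range w) (Finset.range h)) :
    LNAT (bright B) ((Finset.range w) \ PhiS B g)
      (sdrop ((Finset.range h) \ PhiT B g)) where
  gL := fun q => if q ∈ (bright B).leftVertices then g.gL (true :: q) else 0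
  gR := fun q => if q ∈ (bright B).rightVertices then g.gR (true :: q) else 0
  defL := fun p hp => if_neg hp
  defR := fun p hp => if_neg hp
  mapsL := fun q hq => by
    simp only [if_pos hq]
    rw [Finset.mem_sdiff]
    refine ⟨g.mapsL _ (LV_right_mem hq), ?_⟩
    intro hcon
    obtain ⟨p, hp, hh, hv⟩ := mem_PhiS g |>.mp hcon
    have := g.injL p hp _ (LV_right_mem hq) hv
    rw [this] at hh
    simp at hh
  mapsR := fun q hq => by
    simp only [if_pos hq]
    have htq : (true :: q) ∈ B.rightVertices := RV_right_mem hq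
    have hR : bright B ≠ BT.nil := by
      intro hn; rw [hn] at hq; simp [RV_nil] at hq
    have hB : B ≠ BT.nil := by intro hn; rw [hn] at hR; exact hR rfl
    apply mem_sdrop_of_lt
    · rw [Finset.mem_sdiff]
      refine ⟨g.mapsR _ htq, ?_⟩
      intro hcon
      obtain ⟨p, hp, hh, hv⟩ := mem_PhiT g |>.mp hcon
      have := g.injR p hp _ htq hv
      rw [this] at hh
      simp at hh
    · rw [← gR_root_eq_sup g hR]
      exact gR_lt_root g htq (ne_nil_of_mem_RV hq) (true_mem_RV hB hR)
  injL := fun p hp q hq he => by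
    simp only [if_pos hp, if_pos hq] at he
    have := g.injL _ (LV_right_mem hp) _ (LV_right_mem hq) he
    exact (List.cons.injEq .. ▸ this).2
  injR := fun p hp q hq he => by
    simp only [if_pos hp, if_pos hq] at he
    have := g.injR _ (RV_right_mem hp) _ (RV_right_mem hq) he
    exact (List.cons.injEq .. ▸ this).2
  surjL := fun s hs => by
    rw [Finset.mem_sdiff] at hs
    obtain ⟨p, hp, hv⟩ := g.surjL s hs.1
    rcases LV_cases hp with ⟨rfl, hne⟩ | ⟨q, hq, rfl⟩ | ⟨q, hq, rfl⟩
    · exact absurd (mem_PhiS g |>.mpr ⟨[false], hp, rfl, hv⟩) hs.2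
    · exact absurd (mem_PhiS g |>.mpr ⟨false :: q, hp, rfl, hv⟩) hs.2
    · exact ⟨q, hq, by simp only [if_pos hq]; exact hv⟩
  surjR := fun s hs => by
    have hs' := sdrop_subset _ hs
    rw [Finset.mem_sdiff] at hs'
    obtain ⟨p, hp, hv⟩ := g.surjR s hs'.1
    rcases RV_cases hp with ⟨rfl, hne⟩ | ⟨q, hq, rfl⟩ | ⟨q, hq, rfl⟩
    · exfalso
      rw [gR_root_eq_sup g hne] at hv
      rw [← hv] at hs
      exact (Finset.notMem_erase _ _) hs
    · exact absurd (mem_PhiT g |>.mpr ⟨false :: q, hp, rfl, hv⟩) hs'.2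
    · exact ⟨q, hq, by simp only [if_pos hq]; exact hv⟩
  ancL := fun u hu v hv hpre hne => by
    simp only [if_pos hu, if_pos hv]
    exact g.ancL _ (LV_right_mem hu) _ (LV_right_mem hv)
      (List.cons_prefix_cons.mpr ⟨rfl, hpre⟩)
      (fun hc => hne ((List.cons.injEq .. ▸ hc).2))
  ancR := fun u hu v hv hpre hne => by
    simp only [if_pos hu, if_pos hv]
    exact g.ancR _ (RV_right_mem hu) _ (RV_right_mem hv)
      (List.cons_prefix_cons.mpr ⟨rfl, hpre⟩)
      (fun hc => hne ((List.cons.injEq .. ▸ hc).2))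

end Split2
end NCP

namespace NCP
open Finset BT

section Split3
variable {w h : ℕ}

def bwdgL (S : Finset ℕ) (lab rab : List Bool → ℕ) : List Bool → ℕ
  | [] => 0
  | [false] => S.sup id
  | (false :: q) => lab q
  | (true :: q) => rab q

def bwdgR (T' : Finset ℕ) (lab rab : List Bool → ℕ) : List Bool → ℕ
  | [] => 0
  | [true] => T'.sup id
  | (true :: q) => rab q
  | (false :: q) => lab q

lemma bwdgL_nil {S lab rab} : bwdgL S lab rab [] = 0 := rfl
lemma bwdgL_root {S lab rab} : bwdgL S lab rab [false] = S.sup id := rfl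
lemma bwdgL_false {S lab rab q} (hq : q ≠ []) : bwdgL S lab rab (false :: q) = lab q := by
  cases q with
  | nil => exact absurd rfl hq
  | cons a t => rfl
lemma bwdgL_true {S lab rab} (q : List Bool) : bwdgL S lab rab (true :: q) = rab q := by
  cases q with
  | nil => rfl
  | cons a t => rfl
lemma bwdgR_nil {T' lab rab} : bwdgR T' lab rab [] = 0 := rfl
lemma bwdgR_root {T' lab rab} : bwdgR T' lab rab [true] = T'.sup id := rfl
lemma bwdgR_true {T' lab rab q} (hq : q ≠ []) : bwdgR T' lab rab (true :: q) = rab q := by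
  cases q with
  | nil => exact absurd rfl hq
  | cons a t => rfl
lemma bwdgR_false {T' lab rab} (q : List Bool) : bwdgR T' lab rab (false :: q) = lab q := by
  cases q with
  | nil => rfl
  | cons a t => rfl

variable {S T : Finset ℕ} {L R : BT}

/-- reassembling an `LNAT` on `node L R` from its two parts. -/
def bwd (hS : S ⊆ Finset.range w) (hT : T ⊆ Finset.range h)
    (lab : LNAT L (sdrop S) T)
    (rab : LNAT R ((Finset.range w) \ S) (sdrop ((Finset.range h) \ T)))
    (hL : L = BT.nil ↔ S = ∅) (hR : R = BT.nil ↔ (Finset.range h) \ T = ∅) :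
    LNAT (BT.node L R) (Finset.range w) (Finset.range h) where
  gL := bwdgL S lab.gL rab.gL
  gR := bwdgR ((Finset.range h) \ T) lab.gR rab.gR
  defL := by
    intro p hp
    match p with
    | [] => rfl
    | (false :: q) =>
      by_cases hq : q = []
      · subst hq
        have hLnil : L = BT.nil := by
          by_contra hc
          exact hp (mem_LV_node.mpr (Or.inl ⟨rfl, hc⟩))
        rw [bwdgL_root, hL.mp hLnil]
        rfl
      · rw [bwdgL_false hq]
        exact lab.defL q (fun hq' => hp (mem_LV_node.mpr (Or.inr (Or.inl ⟨q, hq', rfl⟩))))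
    | (true :: q) =>
      rw [bwdgL_true]
      exact rab.defL q (fun hq' => hp (mem_LV_node.mpr (Or.inr (Or.inr ⟨q, hq', rfl⟩))))
  defR := by
    intro p hp
    match p with
    | [] => rfl
    | (false :: q) =>
      rw [bwdgR_false]
      exact lab.defR q (fun hq' => hp (mem_RV_node.mpr (Or.inr (Or.inl ⟨q, hq', rfl⟩))))
    | (true :: q) =>
      by_cases hq : q = []
      · subst hq
        have hRnil : R = BT.nil := by
          by_contra hc
          exact hp (mem_RV_node.mpr (Or.inl ⟨rfl, hc⟩))
        rw [bwdgR_root, hR.mp hRnil]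
        rfl
      · rw [bwdgR_true hq]
        exact rab.defR q (fun hq' => hp (mem_RV_node.mpr (Or.inr (Or.inr ⟨q, hq', rfl⟩))))
  mapsL := by
    intro p hp
    rcases mem_LV_node.mp hp with ⟨rfl, hLne⟩ | ⟨q, hq, rfl⟩ | ⟨q, hq, rfl⟩
    · rw [bwdgL_root]
      have : S.Nonempty := Finset.nonempty_iff_ne_empty.mpr (fun hc => hLne (hL.mpr hc))
      exact hS (sup_mem this)
    · rw [bwdgL_false (ne_nil_of_mem_LV hq)]
      exact hS (sdrop_subset S (lab.mapsL q hq))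
    · rw [bwdgL_true]
      exact (Finset.mem_sdiff.mp (rab.mapsL q hq)).1
  mapsR := by
    intro p hp
    rcases mem_RV_node.mp hp with ⟨rfl, hRne⟩ | ⟨q, hq, rfl⟩ | ⟨q, hq, rfl⟩
    · rw [bwdgR_root]
      have : ((Finset.range h) \ T).Nonempty :=
        Finset.nonempty_iff_ne_empty.mpr (fun hc => hRne (hR.mpr hc))
      exact (Finset.mem_sdiff.mp (sup_mem this)).1
    · rw [bwdgR_false]
      exact hT (lab.mapsR q hq)
    · rw [bwdgR_true (ne_nil_of_mem_RV hq)]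
      exact (Finset.mem_sdiff.mp (sdrop_subset _ (rab.mapsR q hq))).1
  injL := by
    intro p hp p' hp' he
    rcases mem_LV_node.mp hp with ⟨rfl, hLne⟩ | ⟨q, hq, rfl⟩ | ⟨q, hq, rfl⟩ <;>
      rcases mem_LV_node.mp hp' with ⟨rfl, hLne'⟩ | ⟨q', hq', rfl⟩ | ⟨q', hq', rfl⟩
    · rfl
    · exfalso
      rw [bwdgL_root, bwdgL_false (ne_nil_of_mem_LV hq')] at he
      exact (Finset.notMem_erase _ S) (he ▸ lab.mapsL q' hq')
    · exfalso
      rw [bwdgL_root, bwdgL_true] at he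
      have h1 : S.Nonempty := Finset.nonempty_iff_ne_empty.mpr (fun hc => hLne (hL.mpr hc))
      exact (Finset.mem_sdiff.mp (rab.mapsL q' hq')).2 (he ▸ sup_mem h1)
    · exfalso
      rw [bwdgL_root, bwdgL_false (ne_nil_of_mem_LV hq)] at he
      exact (Finset.notMem_erase _ S) (he ▸ lab.mapsL q hq)
    · rw [bwdgL_false (ne_nil_of_mem_LV hq), bwdgL_false (ne_nil_of_mem_LV hq')] at he
      rw [lab.injL q hq q' hq' he]
    · exfalso
      rw [bwdgL_false (ne_nil_of_mem_LV hq), bwdgL_true] at he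
      exact (Finset.mem_sdiff.mp (rab.mapsL q' hq')).2 (he ▸ sdrop_subset S (lab.mapsL q hq))
    · exfalso
      rw [bwdgL_true, bwdgL_root] at he
      have h1 : S.Nonempty := Finset.nonempty_iff_ne_empty.mpr (fun hc => hLne' (hL.mpr hc))
      exact (Finset.mem_sdiff.mp (rab.mapsL q hq)).2 (he.symm ▸ sup_mem h1)
    · exfalso
      rw [bwdgL_true, bwdgL_false (ne_nil_of_mem_LV hq')] at he
      exact (Finset.mem_sdiff.mp (rab.mapsL q hq)).2 (he.symm ▸ sdrop_subset S (lab.mapsL q' hq'))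
    · rw [bwdgL_true, bwdgL_true] at he
      rw [rab.injL q hq q' hq' he]
  injR := by
    intro p hp p' hp' he
    rcases mem_RV_node.mp hp with ⟨rfl, hRne⟩ | ⟨q, hq, rfl⟩ | ⟨q, hq, rfl⟩ <;>
      rcases mem_RV_node.mp hp' with ⟨rfl, hRne'⟩ | ⟨q', hq', rfl⟩ | ⟨q', hq', rfl⟩
    · rfl
    · exfalso
      rw [bwdgR_root, bwdgR_false] at he
      have h1 : ((Finset.range h) \ T).Nonempty :=
        Finset.nonempty_iff_ne_empty.mpr (fun hc => hRne (hR.mpr hc))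
      exact (Finset.mem_sdiff.mp (sup_mem h1)).2 (he ▸ lab.mapsR q' hq')
    · exfalso
      rw [bwdgR_root, bwdgR_true (ne_nil_of_mem_RV hq')] at he
      exact (Finset.notMem_erase _ _) (he ▸ rab.mapsR q' hq')
    · exfalso
      rw [bwdgR_false, bwdgR_root] at he
      have h1 : ((Finset.range h) \ T).Nonempty :=
        Finset.nonempty_iff_ne_empty.mpr (fun hc => hRne' (hR.mpr hc))
      exact (Finset.mem_sdiff.mp (sup_mem h1)).2 (he.symm ▸ lab.mapsR q hq)
    · rw [bwdgR_false, bwdgR_false] at he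
      rw [lab.injR q hq q' hq' he]
    · exfalso
      rw [bwdgR_false, bwdgR_true (ne_nil_of_mem_RV hq')] at he
      exact (Finset.mem_sdiff.mp (sdrop_subset _ (rab.mapsR q' hq'))).2 (he.symm ▸ lab.mapsR q hq)
    · exfalso
      rw [bwdgR_true (ne_nil_of_mem_RV hq), bwdgR_root] at he
      exact (Finset.notMem_erase _ _) (he.symm ▸ rab.mapsR q hq)
    · exfalso
      rw [bwdgR_true (ne_nil_of_mem_RV hq), bwdgR_false] at he
      exact (Finset.mem_sdiff.mp (sdrop_subset _ (rab.mapsR q hq))).2 (he ▸ lab.mapsR q' hq')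
    · rw [bwdgR_true (ne_nil_of_mem_RV hq), bwdgR_true (ne_nil_of_mem_RV hq')] at he
      rw [rab.injR q hq q' hq' he]
  surjL := by
    intro s hs
    by_cases hsS : s ∈ S
    · have hSne : S.Nonempty := ⟨s, hsS⟩
      have hLne : L ≠ BT.nil := fun hc => by
        rw [hL.mp hc] at hsS; simp at hsS
      by_cases hsup : s = S.sup id
      · exact ⟨[false], mem_LV_node.mpr (Or.inl ⟨rfl, hLne⟩),
          by rw [bwdgL_root, hsup]⟩
      · obtain ⟨q, hq, hv⟩ := lab.surjL s (Finset.mem_erase.mpr ⟨hsup, hsS⟩)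
        exact ⟨false :: q, mem_LV_node.mpr (Or.inr (Or.inl ⟨q, hq, rfl⟩)),
          by rw [bwdgL_false (ne_nil_of_mem_LV hq)]; exact hv⟩
    · obtain ⟨q, hq, hv⟩ := rab.surjL s (Finset.mem_sdiff.mpr ⟨hs, hsS⟩)
      exact ⟨true :: q, mem_LV_node.mpr (Or.inr (Or.inr ⟨q, hq, rfl⟩)),
        by rw [bwdgL_true]; exact hv⟩
  surjR := by
    intro s hs
    by_cases hsT : s ∈ T
    · obtain ⟨q, hq, hv⟩ := lab.surjR s hsT
      exact ⟨false :: q, mem_RV_node.mpr (Or.inr (Or.inl ⟨q, hq, rfl⟩)),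
        by rw [bwdgR_false]; exact hv⟩
    · have hsT' : s ∈ (Finset.range h) \ T := Finset.mem_sdiff.mpr ⟨hs, hsT⟩
      have hRne : R ≠ BT.nil := fun hc => by
        rw [hR.mp hc] at hsT'; simp at hsT'
      by_cases hsup : s = ((Finset.range h) \ T).sup id
      · exact ⟨[true], mem_RV_node.mpr (Or.inl ⟨rfl, hRne⟩),
          by rw [bwdgR_root, hsup]⟩
      · obtain ⟨q, hq, hv⟩ := rab.surjR s (Finset.mem_erase.mpr ⟨hsup, hsT'⟩)
        exact ⟨true :: q, mem_RV_node.mpr (Or.inr (Or.inr ⟨q, hq, rfl⟩)),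
          by rw [bwdgR_true (ne_nil_of_mem_RV hq)]; exact hv⟩
  ancL := by
    intro u hu v hv hpre hne
    rcases mem_LV_node.mp hu with ⟨rfl, hLne⟩ | ⟨q, hq, rfl⟩ | ⟨q, hq, rfl⟩ <;>
      rcases mem_LV_node.mp hv with ⟨rfl, hLne'⟩ | ⟨q', hq', rfl⟩ | ⟨q', hq', rfl⟩
    · exact absurd rfl hne
    · rw [bwdgL_root, bwdgL_false (ne_nil_of_mem_LV hq')]
      exact lt_sup_of_mem_sdrop (lab.mapsL q' hq')
    · exfalso
      obtain ⟨heq, -⟩ := List.cons_prefix_cons.mp hpre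
      exact Bool.noConfusion heq
    · exfalso
      obtain ⟨-, hpre'⟩ := List.cons_prefix_cons.mp hpre
      exact (ne_nil_of_mem_LV hq) (List.prefix_nil.mp hpre')
    · obtain ⟨-, hpre'⟩ := List.cons_prefix_cons.mp hpre
      rw [bwdgL_false (ne_nil_of_mem_LV hq), bwdgL_false (ne_nil_of_mem_LV hq')]
      exact lab.ancL q hq q' hq' hpre' (fun hc => hne (by rw [hc]))
    · exfalso
      obtain ⟨heq, -⟩ := List.cons_prefix_cons.mp hpre
      exact Bool.noConfusion heq
    · exfalso
      obtain ⟨heq, -⟩ := List.cons_prefix_cons.mp hpre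
      exact Bool.noConfusion heq
    · exfalso
      obtain ⟨heq, -⟩ := List.cons_prefix_cons.mp hpre
      exact Bool.noConfusion heq
    · obtain ⟨-, hpre'⟩ := List.cons_prefix_cons.mp hpre
      rw [bwdgL_true, bwdgL_true]
      exact rab.ancL q hq q' hq' hpre' (fun hc => hne (by rw [hc]))
  ancR := by
    intro u hu v hv hpre hne
    rcases mem_RV_node.mp hu with ⟨rfl, hRne⟩ | ⟨q, hq, rfl⟩ | ⟨q, hq, rfl⟩ <;>
      rcases mem_RV_node.mp hv with ⟨rfl, hRne'⟩ | ⟨q', hq', rfl⟩ | ⟨q', hq', rfl⟩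
    · exact absurd rfl hne
    · exfalso
      obtain ⟨heq, -⟩ := List.cons_prefix_cons.mp hpre
      exact Bool.noConfusion heq
    · rw [bwdgR_root, bwdgR_true (ne_nil_of_mem_RV hq')]
      exact lt_sup_of_mem_sdrop (rab.mapsR q' hq')
    · exfalso
      obtain ⟨heq, -⟩ := List.cons_prefix_cons.mp hpre
      exact Bool.noConfusion heq
    · obtain ⟨-, hpre'⟩ := List.cons_prefix_cons.mp hpre
      rw [bwdgR_false, bwdgR_false]
      exact lab.ancR q hq q' hq' hpre' (fun hc => hne (by rw [hc]))
    · exfalso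
      obtain ⟨heq, -⟩ := List.cons_prefix_cons.mp hpre
      exact Bool.noConfusion heq
    · exfalso
      obtain ⟨-, hpre'⟩ := List.cons_prefix_cons.mp hpre
      exact (ne_nil_of_mem_RV hq) (List.prefix_nil.mp hpre')
    · exfalso
      obtain ⟨heq, -⟩ := List.cons_prefix_cons.mp hpre
      exact Bool.noConfusion heq
    · obtain ⟨-, hpre'⟩ := List.cons_prefix_cons.mp hpre
      rw [bwdgR_true (ne_nil_of_mem_RV hq), bwdgR_true (ne_nil_of_mem_RV hq')]
      exact rab.ancR q hq q' hq' hpre' (fun hc => hne (by rw [hc]))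

end Split3
end NCP

namespace NCP
open Finset BT

/-- copy an LNAT along label-set equalities (no change to the data) -/
def LNAT.copy {B : BT} {S T S' T' : Finset ℕ} (x : LNAT B S T) (hS : S = S') (hT : T = T') :
    LNAT B S' T' where
  gL := x.gL
  gR := x.gR
  defL := x.defL
  defR := x.defR
  mapsL := by subst hS; exact x.mapsL
  mapsR := by subst hT; exact x.mapsR
  injL := x.injL
  injR := x.injR
  surjL := by subst hS; exact x.surjL
  surjR := by subst hT; exact x.surjR
  ancL := x.ancL
  ancR := x.ancR

def LT (S T : Finset ℕ) := Σ B : BT, LNAT B S T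

lemma LT_ext {S T : Finset ℕ} {x y : LT S T} (h1 : x.1 = y.1)
    (h2 : x.2.gL = y.2.gL) (h3 : x.2.gR = y.2.gR) : x = y := by
  obtain ⟨B, g⟩ := x
  obtain ⟨B', g'⟩ := y
  cases h1
  exact congrArg (Sigma.mk B) (LNAT.ext h2 h3)

section SplitEquiv
variable {w h : ℕ} {S T : Finset ℕ}

/-- type of "fiber" elements -/
def Fib (w h : ℕ) (S T : Finset ℕ) :=
  {x : LT (Finset.range w) (Finset.range h) //
    x.1 ≠ BT.nil ∧ PhiS x.1 x.2 = S ∧ PhiT x.1 x.2 = T}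

def LPart (S T : Finset ℕ) := {x : LT (sdrop S) T // x.1 = BT.nil ↔ S = ∅}

def RPart (w h : ℕ) (S T : Finset ℕ) :=
  {x : LT ((Finset.range w) \ S) (sdrop ((Finset.range h) \ T)) //
    x.1 = BT.nil ↔ (Finset.range h) \ T = ∅}

lemma bwd_PhiS {L R : BT} (hS : S ⊆ Finset.range w) (hT : T ⊆ Finset.range h)
    (lab : LNAT L (sdrop S) T)
    (rab : LNAT R ((Finset.range w) \ S) (sdrop ((Finset.range h) \ T)))
    (hL : L = BT.nil ↔ S = ∅) (hR : R = BT.nil ↔ (Finset.range h) \ T = ∅) :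
    PhiS (BT.node L R) (bwd hS hT lab rab hL hR) = S := by
  ext s
  rw [mem_PhiS]
  constructor
  · rintro ⟨p, hp, hh, hv⟩
    rcases mem_LV_node.mp hp with ⟨rfl, hLne⟩ | ⟨q, hq, rfl⟩ | ⟨q, hq, rfl⟩
    · rw [show (bwd hS hT lab rab hL hR).gL = bwdgL S lab.gL rab.gL from rfl,
        bwdgL_root] at hv
      have hSne : S.Nonempty := Finset.nonempty_iff_ne_empty.mpr (fun hc => hLne (hL.mpr hc))
      rw [← hv]
      exact sup_mem hSne
    · rw [show (bwd hS hT lab rab hL hR).gL = bwdgL S lab.gL rab.gL from rfl,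
        bwdgL_false (ne_nil_of_mem_LV hq)] at hv
      exact sdrop_subset S (hv ▸ lab.mapsL q hq)
    · simp at hh
  · intro hsS
    have hSne : S.Nonempty := ⟨s, hsS⟩
    have hLne : L ≠ BT.nil := fun hc => by
      rw [hL.mp hc] at hsS; simp at hsS
    by_cases hsup : s = S.sup id
    · exact ⟨[false], mem_LV_node.mpr (Or.inl ⟨rfl, hLne⟩), rfl,
        by rw [show (bwd hS hT lab rab hL hR).gL = bwdgL S lab.gL rab.gL from rfl,
          bwdgL_root, hsup]⟩
    · obtain ⟨q, hq, hv⟩ := lab.surjL s (Finset.mem_erase.mpr ⟨hsup, hsS⟩)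
      exact ⟨false :: q, mem_LV_node.mpr (Or.inr (Or.inl ⟨q, hq, rfl⟩)), rfl,
        by rw [show (bwd hS hT lab rab hL hR).gL = bwdgL S lab.gL rab.gL from rfl,
          bwdgL_false (ne_nil_of_mem_LV hq)]; exact hv⟩

lemma bwd_PhiT {L R : BT} (hS : S ⊆ Finset.range w) (hT : T ⊆ Finset.range h)
    (lab : LNAT L (sdrop S) T)
    (rab : LNAT R ((Finset.range w) \ S) (sdrop ((Finset.range h) \ T)))
    (hL : L = BT.nil ↔ S = ∅) (hR : R = BT.nil ↔ (Finset.range h) \ T = ∅) :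
    PhiT (BT.node L R) (bwd hS hT lab rab hL hR) = T := by
  ext t
  rw [mem_PhiT]
  constructor
  · rintro ⟨p, hp, hh, hv⟩
    rcases mem_RV_node.mp hp with ⟨rfl, hRne⟩ | ⟨q, hq, rfl⟩ | ⟨q, hq, rfl⟩
    · simp at hh
    · rw [show (bwd hS hT lab rab hL hR).gR = bwdgR ((Finset.range h) \ T) lab.gR rab.gR
        from rfl, bwdgR_false] at hv
      exact hv ▸ lab.mapsR q hq
    · simp at hh
  · intro htT
    obtain ⟨q, hq, hv⟩ := lab.surjR t htT
    exact ⟨false :: q, mem_RV_node.mpr (Or.inr (Or.inl ⟨q, hq, rfl⟩)), rfl,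
      by rw [show (bwd hS hT lab rab hL hR).gR = bwdgR ((Finset.range h) \ T) lab.gR rab.gR
        from rfl, bwdgR_false]; exact hv⟩

lemma copy_gL {B : BT} {S T S' T' : Finset ℕ} (x : LNAT B S T) (h1 : S = S') (h2 : T = T') :
    (x.copy h1 h2).gL = x.gL := rfl

lemma bwd_fwd_gL {B : BT} (g : LNAT B (Finset.range w) (Finset.range h)) (hne : B ≠ BT.nil) :
    bwdgL (PhiS B g) (fwdL g).gL (fwdR g).gL = g.gL := by
  funext p
  match p with
  | [] =>
    rw [bwdgL_nil]
    exact (g.defL [] (fun hc => (ne_nil_of_mem_LV hc) rfl)).symm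
  | (false :: q) =>
    by_cases hq : q = []
    · subst hq
      rw [bwdgL_root]
      by_cases hbl : bleft B = BT.nil
      · rw [(left_nil_iff g hne).mp hbl, sup_empty_eq]
        exact (g.defL [false] (fun hc => (bleft_ne_nil_of_false_mem hc) hbl)).symm
      · exact (gL_root_eq_sup g hbl).symm
    · rw [bwdgL_false hq]
      by_cases hql : q ∈ (bleft B).leftVertices
      · exact if_pos hql
      · rw [show (fwdL g).gL q = 0 from if_neg hql]
        symm
        apply g.defL
        intro hc
        rcases LV_cases hc with ⟨he, -⟩ | ⟨q', hq', he⟩ | ⟨q', hq', he⟩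
        · exact hq ((List.cons.injEq .. ▸ he).2)
        · exact hql (((List.cons.injEq .. ▸ he).2) ▸ hq')
        · exact Bool.noConfusion (List.cons.injEq .. ▸ he).1
  | (true :: q) =>
    rw [bwdgL_true]
    by_cases hql : q ∈ (bright B).leftVertices
    · exact if_pos hql
    · rw [show (fwdR g).gL q = 0 from if_neg hql]
      symm
      apply g.defL
      intro hc
      rcases LV_cases hc with ⟨he, -⟩ | ⟨q', hq', he⟩ | ⟨q', hq', he⟩
      · exact Bool.noConfusion (List.cons.injEq .. ▸ he).1
      · exact Bool.noConfusion (List.cons.injEq .. ▸ he).1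
      · exact hql (((List.cons.injEq .. ▸ he).2) ▸ hq')

lemma bwd_fwd_gR {B : BT} (g : LNAT B (Finset.range w) (Finset.range h)) (hne : B ≠ BT.nil) :
    bwdgR ((Finset.range h) \ PhiT B g) (fwdL g).gR (fwdR g).gR = g.gR := by
  funext p
  match p with
  | [] =>
    rw [bwdgR_nil]
    exact (g.defR [] (fun hc => (ne_nil_of_mem_RV hc) rfl)).symm
  | (true :: q) =>
    by_cases hq : q = []
    · subst hq
      rw [bwdgR_root]
      by_cases hbr : bright B = BT.nil
      · rw [(right_nil_iff g hne).mp hbr, sup_empty_eq]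
        exact (g.defR [true] (fun hc => (bright_ne_nil_of_true_mem hc) hbr)).symm
      · exact (gR_root_eq_sup g hbr).symm
    · rw [bwdgR_true hq]
      by_cases hql : q ∈ (bright B).rightVertices
      · exact if_pos hql
      · rw [show (fwdR g).gR q = 0 from if_neg hql]
        symm
        apply g.defR
        intro hc
        rcases RV_cases hc with ⟨he, -⟩ | ⟨q', hq', he⟩ | ⟨q', hq', he⟩
        · exact hq ((List.cons.injEq .. ▸ he).2)
        · exact Bool.noConfusion (List.cons.injEq .. ▸ he).1
        · exact hql (((List.cons.injEq .. ▸ he).2) ▸ hq')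
  | (false :: q) =>
    rw [bwdgR_false]
    by_cases hql : q ∈ (bleft B).rightVertices
    · exact if_pos hql
    · rw [show (fwdL g).gR q = 0 from if_neg hql]
      symm
      apply g.defR
      intro hc
      rcases RV_cases hc with ⟨he, -⟩ | ⟨q', hq', he⟩ | ⟨q', hq', he⟩
      · exact Bool.noConfusion (List.cons.injEq .. ▸ he).1
      · exact hql (((List.cons.injEq .. ▸ he).2) ▸ hq')
      · exact Bool.noConfusion (List.cons.injEq .. ▸ he).1

section FB
variable {L R : BT} (hS : S ⊆ Finset.range w) (hT : T ⊆ Finset.range h)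
  (lab : LNAT L (sdrop S) T)
  (rab : LNAT R ((Finset.range w) \ S) (sdrop ((Finset.range h) \ T)))
  (hL : L = BT.nil ↔ S = ∅) (hR : R = BT.nil ↔ (Finset.range h) \ T = ∅)

lemma fwd_bwd_gL_left : (fwdL (bwd hS hT lab rab hL hR)).gL = lab.gL := by
  funext q
  by_cases hq : q ∈ L.leftVertices
  · rw [show (fwdL (bwd hS hT lab rab hL hR)).gL q
      = (bwd hS hT lab rab hL hR).gL (false :: q) from if_pos hq]
    show bwdgL S lab.gL rab.gL (false :: q) = _
    rw [bwdgL_false (ne_nil_of_mem_LV hq)]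
  · rw [show (fwdL (bwd hS hT lab rab hL hR)).gL q = 0 from if_neg hq]
    exact (lab.defL q hq).symm

lemma fwd_bwd_gR_left : (fwdL (bwd hS hT lab rab hL hR)).gR = lab.gR := by
  funext q
  by_cases hq : q ∈ L.rightVertices
  · rw [show (fwdL (bwd hS hT lab rab hL hR)).gR q
      = (bwd hS hT lab rab hL hR).gR (false :: q) from if_pos hq]
    show bwdgR ((Finset.range h) \ T) lab.gR rab.gR (false :: q) = _
    rw [bwdgR_false]
  · rw [show (fwdL (bwd hS hT lab rab hL hR)).gR q = 0 from if_neg hq]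
    exact (lab.defR q hq).symm

lemma fwd_bwd_gL_right : (fwdR (bwd hS hT lab rab hL hR)).gL = rab.gL := by
  funext q
  by_cases hq : q ∈ R.leftVertices
  · rw [show (fwdR (bwd hS hT lab rab hL hR)).gL q
      = (bwd hS hT lab rab hL hR).gL (true :: q) from if_pos hq]
    show bwdgL S lab.gL rab.gL (true :: q) = _
    rw [bwdgL_true]
  · rw [show (fwdR (bwd hS hT lab rab hL hR)).gL q = 0 from if_neg hq]
    exact (rab.defL q hq).symm

lemma fwd_bwd_gR_right : (fwdR (bwd hS hT lab rab hL hR)).gR = rab.gR := by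
  funext q
  by_cases hq : q ∈ R.rightVertices
  · rw [show (fwdR (bwd hS hT lab rab hL hR)).gR q
      = (bwd hS hT lab rab hL hR).gR (true :: q) from if_pos hq]
    show bwdgR ((Finset.range h) \ T) lab.gR rab.gR (true :: q) = _
    rw [bwdgR_true (ne_nil_of_mem_RV hq)]
  · rw [show (fwdR (bwd hS hT lab rab hL hR)).gR q = 0 from if_neg hq]
    exact (rab.defR q hq).symm

end FB

/-- The key splitting equivalence. -/
noncomputable def splitEquiv (hS : S ⊆ Finset.range w) (hT : T ⊆ Finset.range h) :
    Fib w h S T ≃ LPart S T × RPart w h S T where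
  toFun x :=
    (⟨⟨bleft x.1.1, (fwdL x.1.2).copy (congrArg sdrop x.2.2.1) x.2.2.2⟩,
        (left_nil_iff x.1.2 x.2.1).trans (iff_of_eq (congrArg (fun s => s = ∅) x.2.2.1))⟩,
     ⟨⟨bright x.1.1, (fwdR x.1.2).copy (congrArg (fun s => Finset.range w \ s) x.2.2.1)
          (congrArg (fun s => sdrop (Finset.range h \ s)) x.2.2.2)⟩,
        (right_nil_iff x.1.2 x.2.1).trans
          (iff_of_eq (congrArg (fun s => Finset.range h \ s = ∅) x.2.2.2))⟩)
  invFun lr :=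
    ⟨⟨BT.node lr.1.1.1 lr.2.1.1, bwd hS hT lr.1.1.2 lr.2.1.2 lr.1.2 lr.2.2⟩,
      node_ne_nil, bwd_PhiS hS hT lr.1.1.2 lr.2.1.2 lr.1.2 lr.2.2, bwd_PhiT hS hT lr.1.1.2 lr.2.1.2 lr.1.2 lr.2.2⟩
  left_inv x := by
    obtain ⟨⟨B, g⟩, hne, hPS, hPT⟩ := x
    apply Subtype.ext
    apply LT_ext
    · exact (bt_eta hne).symm
    · have h2' : bwdgL S (fwdL g).gL (fwdR g).gL = g.gL := by
        rw [← hPS]; exact bwd_fwd_gL g hne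
      exact h2'
    · have h3' : bwdgR ((Finset.range h) \ T) (fwdL g).gR (fwdR g).gR = g.gR := by
        rw [← hPT]; exact bwd_fwd_gR g hne
      exact h3'
  right_inv lr := by
    obtain ⟨⟨⟨L, lab⟩, hL⟩, ⟨⟨R, rab⟩, hR⟩⟩ := lr
    apply Prod.ext
    · apply Subtype.ext
      apply LT_ext
      · rfl
      · exact fwd_bwd_gL_left hS hT lab rab hL hR
      · exact fwd_bwd_gR_left hS hT lab rab hL hR
    · apply Subtype.ext
      apply LT_ext
      · rfl
      · exact fwd_bwd_gL_right hS hT lab rab hL hR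
      · exact fwd_bwd_gR_right hS hT lab rab hL hR

end SplitEquiv
end NCP

namespace NCP
open Finset BT

/-! ### Finiteness -/

lemma mem_paths_of_prefix : ∀ (B : BT) (p q : List Bool),
    p ∈ B.paths → q <+: p → q ∈ B.paths
  | .nil, p, q, hp, _ => by simp [paths_nil] at hp
  | .node L R, p, q, hp, hpre => by
    rcases mem_paths_node.mp hp with rfl | ⟨p', hp', rfl⟩ | ⟨p', hp', rfl⟩
    · rw [List.prefix_nil.mp hpre]
      exact hp
    · cases q with
      | nil => exact mem_paths_node.mpr (Or.inl rfl)
      | cons x q' =>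
        obtain ⟨rfl, hpre'⟩ := List.cons_prefix_cons.mp hpre
        exact mem_paths_node.mpr (Or.inr (Or.inl ⟨q', mem_paths_of_prefix L p' q' hp' hpre', rfl⟩))
    · cases q with
      | nil => exact mem_paths_node.mpr (Or.inl rfl)
      | cons x q' =>
        obtain ⟨rfl, hpre'⟩ := List.cons_prefix_cons.mp hpre
        exact mem_paths_node.mpr (Or.inr (Or.inr ⟨q', mem_paths_of_prefix R p' q' hp' hpre', rfl⟩))

lemma mem_LV_or_RV {B : BT} {p : List Bool} (hp : p ∈ B.paths) (hne : p ≠ []) :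
    p ∈ B.leftVertices ∪ B.rightVertices := by
  obtain ⟨x, q, rfl⟩ := List.exists_cons_of_ne_nil hne
  have : (x :: q).getLast? = some ((x :: q).getLast (by simp)) := List.getLast?_eq_getLast _
  rw [Finset.mem_union, mem_LV_iff, mem_RV_iff]
  cases hb : (x :: q).getLast (by simp)
  · left; exact ⟨hp, by rw [this, hb]⟩
  · right; exact ⟨hp, by rw [this, hb]⟩

lemma length_le_of_mem_paths {B : BT} {p : List Bool} (hp : p ∈ B.paths) :
    p.length ≤ B.leftVertices.card + B.rightVertices.card := by
  have key : (Finset.range p.length).card ≤ (B.leftVertices ∪ B.rightVertices).card := by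
    apply Finset.card_le_card_of_injOn (fun i => p.take (i+1))
    · intro i hi
      simp only [Finset.coe_range, Set.mem_Iio, Finset.mem_coe] at hi ⊢
      apply mem_LV_or_RV
      · exact mem_paths_of_prefix B p _ hp (List.take_prefix _ _)
      · intro hc
        have := congrArg List.length hc
        simp only [List.length_take, List.length_nil] at this
        omega
    · intro i hi j hj he
      simp only [Finset.coe_range, Set.mem_Iio] at hi hj
      have := congrArg List.length he
      simp only [List.length_take] at this
      omega
  rw [Finset.card_range] at key
  exact key.trans (Finset.card_union_le _ _)

lemma paths_ext : ∀ (B B' : BT), (∀ p, p ∈ B.paths ↔ p ∈ B'.paths) → B = B'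
  | .nil, .nil, _ => rfl
  | .nil, .node L R, hiff => by
    have := (hiff []).mpr (mem_paths_node.mpr (Or.inl rfl))
    simp [paths_nil] at this
  | .node L R, .nil, hiff => by
    have := (hiff []).mp (mem_paths_node.mpr (Or.inl rfl))
    simp [paths_nil] at this
  | .node L R, .node L' R', hiff => by
    have hL : L = L' := paths_ext L L' (fun p => by
      have := hiff (false :: p)
      rw [mem_paths_node, mem_paths_node] at this
      constructor
      · intro hp
        rcases this.mp (Or.inr (Or.inl ⟨p, hp, rfl⟩)) with hc | ⟨q, hq, he⟩ | ⟨q, hq, he⟩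
        · exact absurd hc (by simp)
        · injection he with h1 h2; rwa [h2]
        · exact Bool.noConfusion (List.cons.injEq .. ▸ he).1
      · intro hp
        rcases this.mpr (Or.inr (Or.inl ⟨p, hp, rfl⟩)) with hc | ⟨q, hq, he⟩ | ⟨q, hq, he⟩
        · exact absurd hc (by simp)
        · injection he with h1 h2; rwa [h2]
        · exact Bool.noConfusion (List.cons.injEq .. ▸ he).1)
    have hR : R = R' := paths_ext R R' (fun p => by
      have := hiff (true :: p)
      rw [mem_paths_node, mem_paths_node] at this
      constructor
      · intro hp
        rcases this.mp (Or.inr (Or.inr ⟨p, hp, rfl⟩)) with hc | ⟨q, hq, he⟩ | ⟨q, hq, he⟩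
        · exact absurd hc (by simp)
        · exact Bool.noConfusion (List.cons.injEq .. ▸ he).1
        · injection he with h1 h2; rwa [h2]
      · intro hp
        rcases this.mpr (Or.inr (Or.inr ⟨p, hp, rfl⟩)) with hc | ⟨q, hq, he⟩ | ⟨q, hq, he⟩
        · exact absurd hc (by simp)
        · exact Bool.noConfusion (List.cons.injEq .. ▸ he).1
        · injection he with h1 h2; rwa [h2])
    rw [hL, hR]

lemma gL_le_sup {B : BT} {S T : Finset ℕ} (x : LNAT B S T) (p : List Bool) :
    x.gL p ≤ S.sup id := by
  by_cases hp : p ∈ B.leftVertices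
  · exact Finset.le_sup (f := id) (x.mapsL p hp)
  · rw [x.defL p hp]; exact Nat.zero_le _

lemma gR_le_sup {B : BT} {S T : Finset ℕ} (x : LNAT B S T) (p : List Bool) :
    x.gR p ≤ T.sup id := by
  by_cases hp : p ∈ B.rightVertices
  · exact Finset.le_sup (f := id) (x.mapsR p hp)
  · rw [x.defR p hp]; exact Nat.zero_le _

lemma mem_paths_length_le {S T : Finset ℕ} (x : LT S T) {p : List Bool}
    (hp : p ∈ x.1.paths) : p.length ≤ S.card + T.card := by
  have := length_le_of_mem_paths hp
  rwa [x.2.card_left, x.2.card_right] at this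

instance LT_finite (S T : Finset ℕ) : Finite (LT S T) := by
  classical
  set N := S.card + T.card with hN
  set M1 := S.sup id with hM1
  set M2 := T.sup id with hM2
  haveI : Finite {l : List Bool // l.length ≤ N} :=
    Set.Finite.to_subtype (List.finite_length_le Bool N)
  apply Finite.of_injective (fun x : LT S T =>
    (fun l : {l : List Bool // l.length ≤ N} =>
      ((decide (l.1 ∈ x.1.paths) : Bool),
        (⟨x.2.gL l.1, Nat.lt_succ_of_le (gL_le_sup x.2 l.1)⟩ : Fin (M1+1)),
        (⟨x.2.gR l.1, Nat.lt_succ_of_le (gR_le_sup x.2 l.1)⟩ : Fin (M2+1)))))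
  intro x y hxy
  have hmem : ∀ p : List Bool, p ∈ x.1.paths ↔ p ∈ y.1.paths := by
    intro p
    by_cases hlp : p.length ≤ N
    · have := congrFun hxy ⟨p, hlp⟩
      have h1 := congrArg Prod.fst this
      simp only [decide_eq_decide] at h1
      exact h1
    · constructor
      · intro hc; exact absurd (mem_paths_length_le x hc) hlp
      · intro hc; exact absurd (mem_paths_length_le y hc) hlp
  have hB : x.1 = y.1 := paths_ext _ _ hmem
  apply LT_ext hB
  · funext p
    by_cases hlp : p.length ≤ N
    · have := congrFun hxy ⟨p, hlp⟩
      have h2 := congrArg (fun z => (Prod.fst (Prod.snd z) : Fin (M1+1)).1) this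
      exact h2
    · have hx : p ∉ x.1.leftVertices := fun hc =>
        hlp (mem_paths_length_le x (mem_LV_iff.mp hc).1)
      have hy : p ∉ y.1.leftVertices := fun hc =>
        hlp (mem_paths_length_le y (mem_LV_iff.mp hc).1)
      rw [x.2.defL p hx, y.2.defL p hy]
  · funext p
    by_cases hlp : p.length ≤ N
    · have := congrFun hxy ⟨p, hlp⟩
      have h2 := congrArg (fun z => (Prod.snd (Prod.snd z) : Fin (M2+1)).1) this
      exact h2
    · have hx : p ∉ x.1.rightVertices := fun hc =>
        hlp (mem_paths_length_le x (mem_RV_iff.mp hc).1)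
      have hy : p ∉ y.1.rightVertices := fun hc =>
        hlp (mem_paths_length_le y (mem_RV_iff.mp hc).1)
      rw [x.2.defR p hx, y.2.defR p hy]

end NCP

namespace NCP
open Finset BT

/-! ### Cardinalities -/

def NATSet (w h : ℕ) := {x : LT (Finset.range w) (Finset.range h) // x.1 ≠ BT.nil}

noncomputable instance (w h : ℕ) : Fintype (NATSet w h) := by
  have : Finite (NATSet w h) := Subtype.finite
  exact Fintype.ofFinite _

noncomputable instance (w h : ℕ) (S T : Finset ℕ) : Fintype (Fib w h S T) := by
  have : Finite (Fib w h S T) := Subtype.finite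
  exact Fintype.ofFinite _

def trivLNAT : LNAT BT.nil ∅ ∅ where
  gL := fun _ => 0
  gR := fun _ => 0
  defL := fun _ _ => rfl
  defR := fun _ _ => rfl
  mapsL := fun p hp => by simp [LV_nil] at hp
  mapsR := fun p hp => by simp [RV_nil] at hp
  injL := fun p hp => by simp [LV_nil] at hp
  injR := fun p hp => by simp [RV_nil] at hp
  surjL := fun s hs => by simp at hs
  surjR := fun s hs => by simp at hs
  ancL := fun u hu => by simp [LV_nil] at hu
  ancR := fun u hu => by simp [RV_nil] at hu

/-- relabeling the whole sigma type -/
noncomputable def LTrelabel (S T : Finset ℕ) :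
    LT S T ≃ LT (Finset.range S.card) (Finset.range T.card) :=
  Equiv.sigmaCongrRight (fun _ => LNAT.relabelEquiv
    (fIso S (Finset.range S.card) (Finset.card_range _).symm)
    (fIso T (Finset.range T.card) (Finset.card_range _).symm))

noncomputable def LTneEquiv (S T : Finset ℕ) :
    {x : LT S T // x.1 ≠ BT.nil} ≃ NATSet S.card T.card :=
  Equiv.subtypeEquiv (LTrelabel S T) (fun x => Iff.rfl)

lemma card_nil_case (A C : Finset ℕ) :
    Nat.card {x : LT A C // x.1 = BT.nil} = if A = ∅ ∧ C = ∅ then 1 else 0 := by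
  by_cases hAC : A = ∅ ∧ C = ∅
  · obtain ⟨rfl, rfl⟩ := hAC
    rw [if_pos ⟨rfl, rfl⟩]
    have hne : Nonempty {x : LT ∅ ∅ // x.1 = BT.nil} := ⟨⟨⟨BT.nil, trivLNAT⟩, rfl⟩⟩
    have hsub : Subsingleton {x : LT (∅ : Finset ℕ) ∅ // x.1 = BT.nil} := by
      constructor
      intro x y
      apply Subtype.ext
      apply LT_ext (x.2.trans y.2.symm)
      · funext p
        rw [x.1.2.defL p (by rw [x.2]; simp [LV_nil]),
          y.1.2.defL p (by rw [y.2]; simp [LV_nil])]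
      · funext p
        rw [x.1.2.defR p (by rw [x.2]; simp [RV_nil]),
          y.1.2.defR p (by rw [y.2]; simp [RV_nil])]
    exact Nat.card_unique
  · rw [if_neg hAC]
    have : IsEmpty {x : LT A C // x.1 = BT.nil} := by
      constructor
      intro x
      rcases not_and_or.mp hAC with hA | hC
      · obtain ⟨s, hs⟩ := Finset.nonempty_iff_ne_empty.mpr hA
        obtain ⟨p, hp, -⟩ := x.1.2.surjL s hs
        rw [x.2] at hp
        simp [LV_nil] at hp
      · obtain ⟨s, hs⟩ := Finset.nonempty_iff_ne_empty.mpr hC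
        obtain ⟨p, hp, -⟩ := x.1.2.surjR s hs
        rw [x.2] at hp
        simp [RV_nil] at hp
    exact Nat.card_of_isEmpty

lemma LPart_card (S T : Finset ℕ) :
    Nat.card (LPart S T)
      = if S = ∅ then (if T = ∅ then 1 else 0)
        else Nat.card (NATSet (S.card - 1) T.card) := by
  by_cases hS : S = ∅
  · subst hS
    rw [if_pos rfl]
    have e : LPart ∅ T ≃ {x : LT (∅ : Finset ℕ) T // x.1 = BT.nil} := by
      apply Equiv.subtypeEquivRight
      intro x
      constructor
      · intro hx; exact hx.mpr rfl
      · intro hx; exact iff_of_true hx rfl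
    rw [Nat.card_congr e, card_nil_case]
    by_cases hT : T = ∅ <;> simp [hT]
  · rw [if_neg hS]
    have e1 : LPart S T ≃ {x : LT (sdrop S) T // x.1 ≠ BT.nil} := by
      apply Equiv.subtypeEquivRight
      intro x
      constructor
      · intro hx hc; exact hS (hx.mp hc)
      · intro hx; exact iff_of_false hx hS
    rw [Nat.card_congr (e1.trans (LTneEquiv (sdrop S) T))]
    congr 2
    rw [sdrop, Finset.card_erase_of_mem (sup_mem (Finset.nonempty_iff_ne_empty.mpr hS))]

lemma RPart_card (w h : ℕ) (S T : Finset ℕ) :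
    Nat.card (RPart w h S T)
      = if (Finset.range h) \ T = ∅ then (if (Finset.range w) \ S = ∅ then 1 else 0)
        else Nat.card (NATSet ((Finset.range w) \ S).card (((Finset.range h) \ T).card - 1)) := by
  by_cases hT : (Finset.range h) \ T = ∅
  · rw [if_pos hT]
    have e : RPart w h S T ≃ {x : LT ((Finset.range w) \ S) (sdrop ((Finset.range h) \ T)) //
        x.1 = BT.nil} := by
      apply Equiv.subtypeEquivRight
      intro x
      constructor
      · intro hx; exact hx.mpr hT
      · intro hx; exact iff_of_true hx hT
    rw [Nat.card_congr e, card_nil_case, hT, sdrop_empty]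
    by_cases hS : (Finset.range w) \ S = ∅ <;> simp [hS]
  · rw [if_neg hT]
    have e1 : RPart w h S T ≃ {x : LT ((Finset.range w) \ S) (sdrop ((Finset.range h) \ T)) //
        x.1 ≠ BT.nil} := by
      apply Equiv.subtypeEquivRight
      intro x
      constructor
      · intro hx hc; exact hT (hx.mp hc)
      · intro hx; exact iff_of_false hx hT
    rw [Nat.card_congr (e1.trans (LTneEquiv _ _))]
    congr 2
    rw [sdrop, Finset.card_erase_of_mem (sup_mem (Finset.nonempty_iff_ne_empty.mpr hT))]

lemma PhiS_subset {w h : ℕ} {B : BT} (g : LNAT B (Finset.range w) (Finset.range h)) :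
    PhiS B g ⊆ Finset.range w := by
  intro s hs
  obtain ⟨p, hp, -, hv⟩ := mem_PhiS g |>.mp hs
  exact hv ▸ g.mapsL p hp

lemma PhiT_subset {w h : ℕ} {B : BT} (g : LNAT B (Finset.range w) (Finset.range h)) :
    PhiT B g ⊆ Finset.range h := by
  intro s hs
  obtain ⟨p, hp, -, hv⟩ := mem_PhiT g |>.mp hs
  exact hv ▸ g.mapsR p hp

/-- fibers of the label-set map -/
noncomputable def fibEquiv (w h : ℕ) (S T : Finset ℕ) :
    {x : NATSet w h // PhiS x.1.1 x.1.2 = S ∧ PhiT x.1.1 x.1.2 = T} ≃ Fib w h S T where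
  toFun x := ⟨x.1.1, x.1.2, x.2.1, x.2.2⟩
  invFun y := ⟨⟨y.1, y.2.1⟩, y.2.2.1, y.2.2.2⟩
  left_inv x := rfl
  right_inv y := rfl

lemma NATSet_card_eq_sum (w h : ℕ) :
    Nat.card (NATSet w h)
      = ∑ S ∈ (Finset.range w).powerset, ∑ T ∈ (Finset.range h).powerset,
          Nat.card (Fib w h S T) := by
  classical
  rw [← Fintype.card_eq_nat_card, ← Finset.card_univ]
  rw [Finset.card_eq_sum_card_fiberwise
    (f := fun x : NATSet w h => (PhiS x.1.1 x.1.2, PhiT x.1.1 x.1.2))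
    (t := (Finset.range w).powerset ×ˢ (Finset.range h).powerset)
    (fun x _ => by
      simp only [Finset.mem_coe, Finset.mem_product, Finset.mem_powerset]
      exact ⟨PhiS_subset x.1.2, PhiT_subset x.1.2⟩)]
  rw [Finset.sum_product]
  apply Finset.sum_congr rfl
  intro S _
  apply Finset.sum_congr rfl
  intro T _
  rw [← Nat.card_congr (fibEquiv w h S T), ← Fintype.card_eq_nat_card]
  rw [Fintype.card_subtype]
  congr 1
  apply Finset.filter_congr
  intro x _
  rw [Prod.mk.injEq]

end NCP


namespace NCP
open Finset BT ALG

lemma Fib_card (w h : ℕ) (S T : Finset ℕ) (hS : S ⊆ Finset.range w) (hT : T ⊆ Finset.range h) :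
    Nat.card (Fib w h S T) = Nat.card (LPart S T) * Nat.card (RPart w h S T) := by
  rw [Nat.card_congr (splitEquiv hS hT), Nat.card_prod]

lemma sum_powerset_card_nat (s : Finset ℕ) (f : ℕ → ℕ) :
    ∑ t ∈ s.powerset, f t.card = ∑ a ∈ Finset.range (s.card + 1), s.card.choose a * f a := by
  rw [Finset.sum_powerset]
  apply Finset.sum_congr rfl
  intro j _
  rw [Finset.sum_powersetCard j s f, smul_eq_mul]

noncomputable def thmEquiv (w h : ℕ) :
    {T : Σ B : BT, NAT B //
        T.1 ≠ BT.nil ∧ T.1.leftVertices.card = w ∧ T.1.rightVertices.card = h}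
      ≃ NATSet w h where
  toFun x := ⟨⟨x.1.1, natEquivLNAT x.1.1 x.2.2.1 x.2.2.2 x.1.2⟩, x.2.1⟩
  invFun y := ⟨⟨y.1.1, (natEquivLNAT y.1.1 (y.1.2.card_left.trans (Finset.card_range w))
      (y.1.2.card_right.trans (Finset.card_range h))).symm y.1.2⟩, y.2,
      y.1.2.card_left.trans (Finset.card_range w),
      y.1.2.card_right.trans (Finset.card_range h)⟩
  left_inv x := by
    apply Subtype.ext
    exact congrArg (Sigma.mk x.1.1)
      ((natEquivLNAT x.1.1 x.2.2.1 x.2.2.2).symm_apply_apply x.1.2)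
  right_inv y := by
    apply Subtype.ext
    exact congrArg (Sigma.mk y.1.1)
      ((natEquivLNAT y.1.1 (y.1.2.card_left.trans (Finset.card_range w))
        (y.1.2.card_right.trans (Finset.card_range h))).apply_symm_apply y.1.2)

lemma Ncard_eq_Mf (w h : ℕ) : Nat.card (NATSet w h) = Mf w h := by
  suffices H : ∀ n w h, w + h = n → Nat.card (NATSet w h) = Mf w h from H (w + h) w h rfl
  intro n
  induction n using Nat.strong_induction_on with
  | _ n IH =>
    intro w h hn
    rw [NATSet_card_eq_sum]
    have hterm : ∀ S ∈ (Finset.range w).powerset, ∀ T ∈ (Finset.range h).powerset,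
        Nat.card (Fib w h S T) = lamf S.card T.card * rhof (w - S.card) (h - T.card) := by
      intro S hSp T hTp
      rw [Finset.mem_powerset] at hSp hTp
      have hScard : S.card ≤ w := by
        have := Finset.card_le_card hSp
        rwa [Finset.card_range] at this
      have hTcard : T.card ≤ h := by
        have := Finset.card_le_card hTp
        rwa [Finset.card_range] at this
      rw [Fib_card w h S T hSp hTp]
      congr 1
      · rw [LPart_card, lamf_eq]
        by_cases hS0 : S = ∅
        · have hz : S.card = 0 := by rw [hS0]; rfl
          rw [if_pos hS0, if_pos hz]
          by_cases hT0 : T = ∅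
          · have hzT : T.card = 0 := by rw [hT0]; rfl
            rw [if_pos hT0, if_pos hzT]
          · have hzT : T.card ≠ 0 := fun hc => hT0 (Finset.card_eq_zero.mp hc)
            rw [if_neg hT0, if_neg hzT]
        · have hs1 : S.card ≠ 0 := fun hc => hS0 (Finset.card_eq_zero.mp hc)
          rw [if_neg hS0, if_neg hs1]
          exact IH ((S.card - 1) + T.card) (by omega) _ _ rfl
      · rw [RPart_card, rhof_eq]
        have hc1 : ((Finset.range w) \ S).card = w - S.card := by
          rw [Finset.card_sdiff_of_subset hSp, Finset.card_range]
        have hc2 : ((Finset.range h) \ T).card = h - T.card := by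
          rw [Finset.card_sdiff_of_subset hTp, Finset.card_range]
        by_cases hT0 : (Finset.range h) \ T = ∅
        · have hz : h - T.card = 0 := by rw [← hc2, hT0]; rfl
          rw [if_pos hT0, if_pos hz]
          by_cases hS0 : (Finset.range w) \ S = ∅
          · have hz2 : w - S.card = 0 := by rw [← hc1, hS0]; rfl
            rw [if_pos hS0, if_pos hz2]
          · have hz2 : w - S.card ≠ 0 := by
              intro hc
              apply hS0
              rw [← Finset.card_eq_zero, hc1, hc]
            rw [if_neg hS0, if_neg hz2]
        · have hne : h - T.card ≠ 0 := by
            intro hc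
            apply hT0
            rw [← Finset.card_eq_zero, hc2, hc]
          rw [if_neg hT0, if_neg hne, hc1, hc2]
          exact IH ((w - S.card) + (h - T.card - 1)) (by omega) _ _ rfl
    rw [Finset.sum_congr rfl (fun S hS => Finset.sum_congr rfl (fun T hT => hterm S hS T hT))]
    have hinner : ∀ S ∈ (Finset.range w).powerset,
        ∑ T ∈ (Finset.range h).powerset, lamf S.card T.card * rhof (w - S.card) (h - T.card)
          = ∑ b ∈ Finset.range (h+1),
              h.choose b * (lamf S.card b * rhof (w - S.card) (h - b)) := by
      intro S _
      have := sum_powerset_card_nat (Finset.range h)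
        (fun t => lamf S.card t * rhof (w - S.card) (h - t))
      rw [Finset.card_range] at this
      exact this
    rw [Finset.sum_congr rfl hinner]
    have houter := sum_powerset_card_nat (Finset.range w)
      (fun a => ∑ b ∈ Finset.range (h+1), h.choose b * (lamf a b * rhof (w - a) (h - b)))
    rw [Finset.card_range] at houter
    rw [houter, Mf_rec]
    apply Finset.sum_congr rfl
    intro a _
    rw [Finset.mul_sum]
    apply Finset.sum_congr rfl
    intro b _
    ring

end NCP

/-- The number of non-ambiguous trees with `w` left children and `h` right
children is `Σ_{p≥1} (p−1)! · p! · S(w+1,p) · S(h+1,p)` (the summands vanish for `p > w+1`). -/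
theorem natCount_eq_sum_stirling (w h : ℕ) :
    Nat.card {T : Σ B : BT, NAT B //
        T.1 ≠ BT.nil ∧ T.1.leftVertices.card = w ∧ T.1.rightVertices.card = h} =
      ∑ p ∈ Finset.Icc 1 (w + 1),
        (p - 1).factorial * p.factorial * stirling2 (w + 1) p * stirling2 (h + 1) p := by
  rw [Nat.card_congr (NCP.thmEquiv w h), NCP.Ncard_eq_Mf, ALG.target_eq_Mf]
end
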